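/- arXiv:math/0304146 — 6 statements merged into one kernel-verified Lean document; each statement's English description precedes it below -/
import Mathlib

section
/- Let α, β : ℝ^{2n} → ℝ be smooth functions, let X be a J-tangent vector field, and set Y := αX + β(JX) (which is again J-tangent). Then for every p ∈ M, L_φ(Y)(p) = (α(p)² + β(p)²)·L_φ(X)(p), i.e. dφ(J[Y, JY])(p) = (α(p)² + β(p)²)·dφ(J[X, JX])(p). -/
open Complex Filter Asymptotics Metric Topology

noncomputable section

/-- `ℝ^{2n}` identified with `ℂ^n`. -/
abbrev E (n : ℕ) : Type := EuclideanSpace ℂ (Fin n)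

/-- `∇_X Y` : the directional derivative of the vector field `Y` in the direction `X`,
with respect to the standard flat connection of `ℝ^{2n}`. -/
def nabla {n : ℕ} (X Y : E n → E n) : E n → E n := fun p => fderiv ℝ Y p (X p)

/-- Lie bracket of vector fields. -/
def lie {n : ℕ} (X Y : E n → E n) : E n → E n := fun p => nabla X Y p - nabla Y X p

/-- The vector field `J X`. -/
def JVF {n : ℕ} (J : E n → (E n →L[ℝ] E n)) (X : E n → E n) : E n → E n := fun p => J p (X p)

/-- The Levi form `L_φ(X) = dφ(J[X, JX])`. -/
def Levi {n : ℕ} (J : E n → (E n →L[ℝ] E n)) (φ : E n → ℝ) (X : E n → E n) : E n → ℝ :=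
  fun p => fderiv ℝ φ p (J p (lie X (JVF J X) p))

/-- `v ∈ T^J_p M`, i.e. `dφ_p v = 0` and `dφ_p (J p v) = 0`. -/
def InTJ {n : ℕ} (J : E n → (E n →L[ℝ] E n)) (φ : E n → ℝ) (p v : E n) : Prop :=
  fderiv ℝ φ p v = 0 ∧ fderiv ℝ φ p (J p v) = 0

/-- A smooth vector field which is `J`-tangent to `M = φ⁻¹(0)`. -/
def JTangent {n : ℕ} (J : E n → (E n →L[ℝ] E n)) (φ : E n → ℝ) (X : E n → E n) : Prop :=
  ContDiff ℝ (⊤ : ℕ∞) X ∧ ∀ p, φ p = 0 → InTJ J φ p (X p)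

/-- A germ of `J`-holomorphic disk: `u` is smooth on the ball of radius `ε > 0` around `0`
and satisfies the Cauchy–Riemann equation `∂u/∂y = J(u) ∂u/∂x` there. -/
def IsJDisk {n : ℕ} (J : E n → (E n →L[ℝ] E n)) (u : ℂ → E n) (ε : ℝ) : Prop :=
  0 < ε ∧ ContDiffOn ℝ (⊤ : ℕ∞) u (ball (0 : ℂ) ε) ∧
    ∀ z ∈ ball (0 : ℂ) ε, fderiv ℝ u z Complex.I = J (u z) (fderiv ℝ u z 1)

/-- `∂f/∂x`. -/
def dx {F : Type*} [NormedAddCommGroup F] [NormedSpace ℝ F] (f : ℂ → F) : ℂ → F :=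
  fun z => fderiv ℝ f z 1

/-- `∂f/∂y`. -/
def dy {F : Type*} [NormedAddCommGroup F] [NormedSpace ℝ F] (f : ℂ → F) : ℂ → F :=
  fun z => fderiv ℝ f z Complex.I

/-- Laplacian `Δ f = ∂²f/∂x² + ∂²f/∂y²`. -/
def lap {F : Type*} [NormedAddCommGroup F] [NormedSpace ℝ F] (f : ℂ → F) : ℂ → F :=
  fun z => dx (dx f) z + dy (dy f) z

/-- `(p,q)`-th mixed derivative `∂^{p+q} f / ∂x^p ∂y^q`. -/
def mixD {F : Type*} [NormedAddCommGroup F] [NormedSpace ℝ F] (p q : ℕ) (f : ℂ → F) : ℂ → F :=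
  dx^[p] (dy^[q] f)

/-- `D^{p,q}_X X = (JX)·⋯·(JX)·X·⋯·X·X` (`q` factors `JX` followed by `p` factors `X`,
applied to `X`). -/
def Dpq {n : ℕ} (J : E n → (E n →L[ℝ] E n)) (X : E n → E n) (p q : ℕ) : E n → E n :=
  (nabla (JVF J X))^[q] ((nabla X)^[p] X)

/-- `X^m = ∇_X(⋯(∇_X X))` with `m` factors (`X^1 = X`). -/
def Xpow {n : ℕ} (X : E n → E n) (m : ℕ) : E n → E n := (nabla X)^[m - 1] X

/-- Iterated Lie brackets with `m` factors taken from the set `S` of vector fields. -/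
inductive IterBrk {n : ℕ} (S : Set (E n → E n)) : ℕ → (E n → E n) → Prop
  | base (W : E n → E n) (hW : W ∈ S) : IterBrk S 1 W
  | brk {m₁ m₂ : ℕ} {W₁ W₂ : E n → E n} (h₁ : IterBrk S m₁ W₁) (h₂ : IterBrk S m₂ W₂) :
      IterBrk S (m₁ + m₂) (lie W₁ W₂)

/-- Right-associated iterated product `X₁·X₂·⋯·X_m` of a list of vector fields. -/
def prodVF {n : ℕ} : List (E n → E n) → (E n → E n)
  | [] => fun _ => 0
  | [X] => X
  | X :: Y :: rest => nabla X (prodVF (Y :: rest))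

end

/-- `L_φ((α + βJ)X)(p) = (α(p)² + β(p)²)·L_φ(X)(p)` on `M`. -/
theorem levi_form_rescaling {n : ℕ} (J : E n → (E n →L[ℝ] E n)) (φ : E n → ℝ)
    (hJsmooth : ContDiff ℝ (⊤ : ℕ∞) J) (hJ2 : ∀ x v, J x (J x v) = -v)
    (hJ0 : ∀ v : E n, J 0 v = Complex.I • v)
    (hφsmooth : ContDiff ℝ (⊤ : ℕ∞) φ) (hφ0 : φ 0 = 0)
    (hreg : ∀ x, φ x = 0 → fderiv ℝ φ x ≠ 0)
    (α β : E n → ℝ) (hα : ContDiff ℝ (⊤ : ℕ∞) α) (hβ : ContDiff ℝ (⊤ : ℕ∞) β)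
    (X : E n → E n) (hX : JTangent J φ X) :
    ∀ p, φ p = 0 →
      Levi J φ (fun x => α x • X x + β x • (J x (X x))) p
        = (α p ^ 2 + β p ^ 2) * Levi J φ X p := by
  intro p hp
  obtain ⟨hXs, hXt⟩ := hX
  obtain ⟨h1, h2⟩ := hXt p hp
  have hBs : ContDiff ℝ (⊤ : ℕ∞) (fun x => J x (X x)) := hJsmooth.clm_apply hXs
  have hXd : HasFDerivAt X (fderiv ℝ X p) p := (hXs.differentiable (by simp) p).hasFDerivAt
  have hBd : HasFDerivAt (fun x => J x (X x)) (fderiv ℝ (fun x => J x (X x)) p) p :=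
    (hBs.differentiable (by simp) p).hasFDerivAt
  have hαd : HasFDerivAt α (fderiv ℝ α p) p := (hα.differentiable (by simp) p).hasFDerivAt
  have hβd : HasFDerivAt β (fderiv ℝ β p) p := (hβ.differentiable (by simp) p).hasFDerivAt
  have hYeq : (JVF J (fun x => α x • X x + β x • (J x (X x))))
      = fun x => α x • (J x (X x)) - β x • X x := by
    funext x
    simp only [JVF, map_add, map_smul, hJ2, smul_neg]
    rw [← sub_eq_add_neg]
  have hYd : HasFDerivAt (fun x => α x • X x + β x • (J x (X x)))
      ((α p • fderiv ℝ X p + (fderiv ℝ α p).smulRight (X p)) +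
        (β p • fderiv ℝ (fun x => J x (X x)) p + (fderiv ℝ β p).smulRight (J p (X p)))) p :=
    (hαd.smul hXd).add (hβd.smul hBd)
  have hJYd : HasFDerivAt (JVF J (fun x => α x • X x + β x • (J x (X x))))
      ((α p • fderiv ℝ (fun x => J x (X x)) p + (fderiv ℝ α p).smulRight (J p (X p))) -
        (β p • fderiv ℝ X p + (fderiv ℝ β p).smulRight (X p))) p := by
    rw [hYeq]
    exact (hαd.smul hBd).sub (hβd.smul hXd)
  have hJYp : JVF J (fun x => α x • X x + β x • (J x (X x))) p
      = α p • (J p (X p)) - β p • X p := by rw [hYeq]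
  simp only [Levi, lie, nabla, JVF, hYd.fderiv, hJYd.fderiv, hJYp]
  simp only [ContinuousLinearMap.add_apply, ContinuousLinearMap.sub_apply,
    ContinuousLinearMap.smul_apply, ContinuousLinearMap.smulRight_apply,
    ContinuousLinearMap.coe_smul', Pi.smul_apply, map_add, map_sub, map_smul, map_neg,
    hJ2, smul_neg, smul_eq_mul, h1, h2]
  rw [show (JVF J X) = (fun x => J x (X x)) from rfl]
  ring
end

section
/- For every p ∈ M and every J-tangent vector field X, the Levi form satisfies L_φ(X)(p) = D²φ_p(X(p), X(p)) + D²φ_p(J(p)X(p), J(p)X(p)) + dφ_p( (∇_{JX}J)(X) − (∇_X J)(JX) )(p), where D²φ denotes the second derivative (Hessian) of φ, ∇ is the standard flat connection of ℝ^{2n} (a symmetric connection), and ∇_Y J denotes the directional derivative of the endomorphism-valued map J in the direction Y. -/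
open Complex Filter Asymptotics Metric Topology

/-- If a smooth function `g` vanishes on the hypersurface `M = φ⁻¹(0)` and `v` is tangent
to `M` at `p` (i.e. `dφ_p v = 0`), then `dg_p v = 0`. Proved via Lagrange multipliers. -/
lemma tangent_deriv_zero {n : ℕ} (φ g : E n → ℝ) (hφ : ContDiff ℝ (⊤ : ℕ∞) φ)
    (hg : ContDiff ℝ (⊤ : ℕ∞) g) (p : E n) (hp : φ p = 0)
    (hreg : fderiv ℝ φ p ≠ 0) (hgM : ∀ q, φ q = 0 → g q = 0)
    (v : E n) (hv : fderiv ℝ φ p v = 0) : fderiv ℝ g p v = 0 := by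
  have hφ' : HasStrictFDerivAt φ (fderiv ℝ φ p) p := hφ.hasStrictFDerivAt (by simp)
  have hg' : HasStrictFDerivAt g (fderiv ℝ g p) p := hg.hasStrictFDerivAt (by simp)
  have hzero : ∀ᶠ x in nhdsWithin p {x | φ x = φ p}, g x = 0 := by
    filter_upwards [self_mem_nhdsWithin] with x hx
    exact hgM x (by simpa [hp] using hx)
  have hextr : IsLocalExtrOn g {x | φ x = φ p} p := by
    left
    have hgp : g p = 0 := hgM p hp
    filter_upwards [hzero] with x hx
    rw [hgp, hx]
  obtain ⟨a, b, hab, hsum⟩ := hextr.exists_multipliers_of_hasStrictFDerivAt_1d hφ' hg'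
  have hb : b ≠ 0 := by
    intro hb0
    have ha : a ≠ 0 := by
      intro ha0
      exact hab (by simp [ha0, hb0, Prod.ext_iff])
    apply hreg
    have := hsum
    rw [hb0, zero_smul, add_zero] at this
    have := smul_eq_zero.mp this
    tauto
  have hv' := congrArg (fun (L : E n →L[ℝ] ℝ) => L v) hsum
  simp only [ContinuousLinearMap.add_apply, ContinuousLinearMap.smul_apply,
    ContinuousLinearMap.zero_apply, hv, smul_eq_mul, mul_zero, zero_add] at hv'
  exact (mul_eq_zero.mp hv').resolve_left hb

/-- the Levi form in terms of the Hessian of `φ` and derivatives of `J`: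
`L_φ(X) = D²φ(X,X) + D²φ(JX,JX) + dφ((∇_{JX}J)X − (∇_X J)(JX))`. -/
theorem levi_form_hessian {n : ℕ} (J : E n → (E n →L[ℝ] E n)) (φ : E n → ℝ)
    (hJsmooth : ContDiff ℝ (⊤ : ℕ∞) J) (hJ2 : ∀ x v, J x (J x v) = -v)
    (hJ0 : ∀ v : E n, J 0 v = Complex.I • v)
    (hφsmooth : ContDiff ℝ (⊤ : ℕ∞) φ) (hφ0 : φ 0 = 0)
    (hreg : ∀ x, φ x = 0 → fderiv ℝ φ x ≠ 0)
    (X : E n → E n) (hX : JTangent J φ X) :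
    ∀ p, φ p = 0 →
      Levi J φ X p
        = fderiv ℝ (fderiv ℝ φ) p (X p) (X p)
          + fderiv ℝ (fderiv ℝ φ) p (J p (X p)) (J p (X p))
          + fderiv ℝ φ p
              ((fderiv ℝ J p (J p (X p))) (X p) - (fderiv ℝ J p (X p)) (J p (X p))) := by
  intro p hp
  have hXs : ContDiff ℝ (⊤ : ℕ∞) X := hX.1
  have hφ' : ContDiff ℝ (⊤ : ℕ∞) (fderiv ℝ φ) := hφsmooth.fderiv_right (by exact_mod_cast le_top)
  have hJX : ContDiff ℝ (⊤ : ℕ∞) (JVF J X) := hJsmooth.clm_apply hXs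
  set Xp := X p with hXp
  set JXp := J p (X p) with hJXp
  set A := fderiv ℝ X p with hA
  set DJ := fderiv ℝ J p with hDJ
  set dφ := fderiv ℝ φ p with hdφ
  set Hφ := fderiv ℝ (fderiv ℝ φ) p with hHφ
  -- derivative of JVF J X at p
  have hJXd : fderiv ℝ (JVF J X) p = (J p).comp A + DJ.flip Xp := by
    unfold JVF
    exact fderiv_clm_apply (hJsmooth.differentiable (by simp) p) (hXs.differentiable (by simp) p)
  -- tangency facts
  have htan := hX.2 p hp
  have hvX : dφ Xp = 0 := htan.1
  have hvJX : dφ JXp = 0 := htan.2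
  -- g := dφ(X) vanishes on M
  have hgs : ContDiff ℝ (⊤ : ℕ∞) (fun q => fderiv ℝ φ q (X q)) := hφ'.clm_apply hXs
  have hhs : ContDiff ℝ (⊤ : ℕ∞) (fun q => fderiv ℝ φ q (JVF J X q)) := hφ'.clm_apply hJX
  have hgd : fderiv ℝ (fun q => fderiv ℝ φ q (X q)) p = dφ.comp A + Hφ.flip Xp :=
    fderiv_clm_apply (hφ'.differentiable (by simp) p) (hXs.differentiable (by simp) p)
  have hhd : fderiv ℝ (fun q => fderiv ℝ φ q (JVF J X q)) p
      = dφ.comp (fderiv ℝ (JVF J X) p) + Hφ.flip JXp :=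
    fderiv_clm_apply (hφ'.differentiable (by simp) p) (hJX.differentiable (by simp) p)
  have E1 : dφ (A Xp) + Hφ Xp Xp = 0 := by
    have h0 : fderiv ℝ (fun q => fderiv ℝ φ q (X q)) p Xp = 0 :=
      tangent_deriv_zero φ _ hφsmooth hgs p hp (hreg p hp)
        (fun q hq => (hX.2 q hq).1) Xp hvX
    rw [hgd] at h0
    simpa using h0
  have E2 : dφ (J p (A JXp)) + dφ (DJ JXp Xp) + Hφ JXp JXp = 0 := by
    have h0 : fderiv ℝ (fun q => fderiv ℝ φ q (JVF J X q)) p JXp = 0 :=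
      tangent_deriv_zero φ _ hφsmooth hhs p hp (hreg p hp)
        (fun q hq => (hX.2 q hq).2) JXp hvJX
    rw [hhd, hJXd] at h0
    simp only [ContinuousLinearMap.add_apply, ContinuousLinearMap.comp_apply,
      ContinuousLinearMap.flip_apply, map_add] at h0
    linarith
  -- differentiating J² = -1
  have E3 : DJ Xp JXp + J p (DJ Xp Xp) = 0 := by
    have hconst : (fun q => J q (J q Xp)) = fun _ => -Xp := funext fun q => hJ2 q Xp
    have hu : DifferentiableAt ℝ (fun q => J q Xp) p :=
      ((hJsmooth.differentiable (by simp) p).clm_apply (differentiableAt_const Xp))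
    have hud : fderiv ℝ (fun q => J q Xp) p = DJ.flip Xp := by
      have := fderiv_clm_apply (u := fun _ => Xp) (hJsmooth.differentiable (by simp) p)
        (differentiableAt_const Xp)
      simpa using this
    have h0 : fderiv ℝ (fun q => J q (J q Xp)) p = 0 := by
      rw [hconst]; exact fderiv_const_apply _
    have h1 := fderiv_clm_apply (c := J) (u := fun q => J q Xp)
      (hJsmooth.differentiable (by simp) p) hu
    rw [h0, hud] at h1
    have h2 := congrArg (fun (L : E n →L[ℝ] E n) => L Xp) h1.symm
    simp only [ContinuousLinearMap.add_apply, ContinuousLinearMap.comp_apply,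
      ContinuousLinearMap.flip_apply, ContinuousLinearMap.zero_apply] at h2
    rw [add_comm]
    rw [hJXp]
    exact h2.symm ▸ h2
  -- expand the Levi form
  have hlie : lie X (JVF J X) p = J p (A Xp) + DJ Xp Xp - A JXp := by
    unfold lie nabla
    rw [hJXd]
    simp [ContinuousLinearMap.add_apply, ContinuousLinearMap.comp_apply,
      ContinuousLinearMap.flip_apply]
    rfl
  have hLevi : Levi J φ X p
      = dφ (J p (DJ Xp Xp)) - dφ (A Xp) - dφ (J p (A JXp)) := by
    unfold Levi
    rw [hlie]
    have : J p (J p (A Xp) + DJ Xp Xp - A JXp)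
        = -(A Xp) + J p (DJ Xp Xp) - J p (A JXp) := by
      rw [map_sub, map_add, hJ2]
    rw [this]
    simp [map_sub, map_add]
    ring
  have E3' : dφ (J p (DJ Xp Xp)) = - dφ (DJ Xp JXp) := by
    have : J p (DJ Xp Xp) = -(DJ Xp JXp) := by
      have := E3
      have h := congrArg (fun w => -w + (J p (DJ Xp Xp)) + (DJ Xp JXp) - (DJ Xp JXp)) this
      -- simpler:
      linear_combination (norm := module) this
    rw [this, map_neg]
  rw [hLevi, E3', map_sub]
  linarith
end

section
/- Let u be a J-holomorphic disk with u(0) = 0 and ∂u/∂x(0) ∈ T^J_0 M, and let X be any J-tangent vector field with X(0) = ∂u/∂x(0). Then Δ(φ∘u)(0) = L_φ(X)(0), where Δ = ∂²/∂x² + ∂²/∂y² is the Laplacian in the coordinate z = x + iy on ℂ. -/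
set_option maxHeartbeats 1600000


open Complex Filter Asymptotics Metric Topology

section

/-- Derivative of `fun y => c y a` for a fixed vector `a`. -/
lemma fderiv_clm_apply_const' {𝕜 : Type*} [NontriviallyNormedField 𝕜]
    {G F H : Type*} [NormedAddCommGroup G] [NormedSpace 𝕜 G]
    [NormedAddCommGroup F] [NormedSpace 𝕜 F] [NormedAddCommGroup H] [NormedSpace 𝕜 H]
    {c : G → F →L[𝕜] H} {x : G} (hc : DifferentiableAt 𝕜 c x) (a : F) :
    fderiv 𝕜 (fun y => c y a) x = (fderiv 𝕜 c x).flip a := by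
  rw [fderiv_clm_apply hc (differentiableAt_const a)]
  simp

/-- If `g` vanishes on the hypersurface `φ⁻¹(0)` and `w` is tangent to it at `0`,
then `dg₀ w = 0`. -/
lemma vanish_on_hypersurface {n : ℕ} {φ g : E n → ℝ}
    (hφ : ContDiff ℝ (⊤ : ℕ∞) φ) (hg : DifferentiableAt ℝ g 0) (hφ0 : φ 0 = 0)
    (hvan : ∀ p, φ p = 0 → g p = 0) (hreg : fderiv ℝ φ 0 ≠ 0)
    {w : E n} (hw : fderiv ℝ φ 0 w = 0) : fderiv ℝ g 0 w = 0 := by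
  obtain ⟨e, he⟩ : ∃ e, fderiv ℝ φ 0 e ≠ 0 := by
    by_contra h; push_neg at h; exact hreg (ContinuousLinearMap.ext h)
  set dφ := fderiv ℝ φ 0 with hdφ
  set L : ℝ × ℝ →L[ℝ] E n :=
    (ContinuousLinearMap.fst ℝ ℝ ℝ).smulRight w + (ContinuousLinearMap.snd ℝ ℝ ℝ).smulRight e
    with hL
  have hLapp : ∀ t s : ℝ, L (t, s) = t • w + s • e := by intro t s; simp [hL]
  have hL0 : L (0, 0) = 0 := by simp [hLapp]
  set D : ℝ × ℝ →L[ℝ] ℝ × ℝ := (ContinuousLinearMap.fst ℝ ℝ ℝ).prod (dφ.comp L) with hD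
  set Dinv : ℝ × ℝ →L[ℝ] ℝ × ℝ :=
    (ContinuousLinearMap.fst ℝ ℝ ℝ).prod ((dφ e)⁻¹ • (ContinuousLinearMap.snd ℝ ℝ ℝ)) with hDinv
  have hDapp : ∀ t s : ℝ, D (t, s) = (t, s * dφ e) := by
    intro t s
    simp [hD, hLapp, map_add, map_smul, hw, smul_eq_mul]
  have h₁ : Function.LeftInverse Dinv D := by
    rintro ⟨t, s⟩
    simp [hDapp, hDinv, smul_eq_mul]
    field_simp
  have h₂ : Function.RightInverse Dinv D := by
    rintro ⟨t, s⟩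
    simp only [hDinv, ContinuousLinearMap.prod_apply, ContinuousLinearMap.coe_fst',
      ContinuousLinearMap.coe_smul', Pi.smul_apply, ContinuousLinearMap.coe_snd', smul_eq_mul]
    rw [hDapp]
    field_simp
  set Deq : (ℝ × ℝ) ≃L[ℝ] ℝ × ℝ := ContinuousLinearEquiv.equivOfInverse D Dinv h₁ h₂ with hDeq
  set ψ : ℝ × ℝ → ℝ × ℝ := fun p => (p.1, φ (L p)) with hψdef
  have hψ : HasStrictFDerivAt ψ (Deq : (ℝ × ℝ) →L[ℝ] ℝ × ℝ) (0, 0) := by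
    have h1 : HasStrictFDerivAt (fun p : ℝ × ℝ => φ (L p)) (dφ.comp L) (0, 0) := by
      have hφ' : HasStrictFDerivAt φ dφ (L (0, 0)) := by
        rw [hL0]
        exact (hφ.contDiffAt.hasStrictFDerivAt (by simp)).congr_fderiv rfl
      exact hφ'.comp (0, 0) L.hasStrictFDerivAt
    have h2 : HasStrictFDerivAt (fun p : ℝ × ℝ => p.1)
        (ContinuousLinearMap.fst ℝ ℝ ℝ) (0, 0) :=
      (ContinuousLinearMap.fst ℝ ℝ ℝ).hasStrictFDerivAt
    have := h2.prodMk h1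
    rwa [show (Deq : (ℝ × ℝ) →L[ℝ] ℝ × ℝ) = D from rfl]
  have hψ00 : ψ (0, 0) = (0, 0) := by simp [hψdef, hL0, hφ0]
  set inv : ℝ × ℝ → ℝ × ℝ := hψ.localInverse ψ Deq (0, 0) with hinvdef
  have hinv00 : inv (0, 0) = (0, 0) := by
    conv_lhs => rw [← hψ00]
    exact hψ.localInverse_apply_image
  have hinvD : HasStrictFDerivAt inv ((Deq.symm : (ℝ × ℝ) →L[ℝ] ℝ × ℝ)) (0, 0) := by
    have := hψ.to_localInverse
    rwa [hψ00] at this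
  have hright : ∀ᶠ y in 𝓝 ((0 : ℝ), (0 : ℝ)), ψ (inv y) = y := by
    have := hψ.eventually_right_inverse
    rwa [hψ00] at this
  set c : ℝ → E n := fun t => L (inv (t, 0)) with hcdef
  have htend : Tendsto (fun t : ℝ => ((t, 0) : ℝ × ℝ)) (𝓝 0) (𝓝 (0, 0)) := by
    have : Continuous (fun t : ℝ => ((t, 0) : ℝ × ℝ)) := by continuity
    simpa using this.tendsto 0
  have hevφ : ∀ᶠ t in 𝓝 (0 : ℝ), φ (c t) = 0 := by
    filter_upwards [htend.eventually hright] with t ht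
    exact congrArg Prod.snd ht
  have hevg : (fun t => g (c t)) =ᶠ[𝓝 (0 : ℝ)] fun _ => (0 : ℝ) := by
    filter_upwards [hevφ] with t ht
    exact hvan _ ht
  have hc0 : c 0 = 0 := by
    have h00 : ((0 : ℝ), (0 : ℝ)) = (0 : ℝ × ℝ) := rfl
    show L (inv ((0 : ℝ), (0 : ℝ))) = 0
    rw [hinv00, hL0]
  set C : ℝ →L[ℝ] E n :=
    L.comp ((Deq.symm : (ℝ × ℝ) →L[ℝ] ℝ × ℝ).comp (ContinuousLinearMap.inl ℝ ℝ ℝ)) with hC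
  have hcD : HasFDerivAt c C 0 := by
    have h1 : HasFDerivAt (fun t : ℝ => ((t, 0) : ℝ × ℝ)) (ContinuousLinearMap.inl ℝ ℝ ℝ) 0 :=
      (ContinuousLinearMap.inl ℝ ℝ ℝ).hasFDerivAt
    have h2 : HasFDerivAt inv ((Deq.symm : (ℝ × ℝ) →L[ℝ] ℝ × ℝ)) ((0 : ℝ), (0 : ℝ)) :=
      hinvD.hasFDerivAt
    have h3 := h2.comp (f := fun t : ℝ => ((t, 0) : ℝ × ℝ)) (0 : ℝ) h1
    have h4 : HasFDerivAt L (L : ℝ × ℝ →L[ℝ] E n) (inv ((0:ℝ), (0:ℝ))) := L.hasFDerivAt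
    exact h4.comp (f := fun t : ℝ => inv (t, 0)) 0 h3
  have hgc : HasFDerivAt (fun t => g (c t)) ((fderiv ℝ g 0).comp C) 0 := by
    have h' : HasFDerivAt g (fderiv ℝ g 0) (c 0) := by rw [hc0]; exact hg.hasFDerivAt
    exact h'.comp (f := c) 0 hcD
  have hzero : (fderiv ℝ g 0).comp C = 0 := by
    rw [← hgc.fderiv]
    rw [hevg.fderiv_eq]
    exact fderiv_const_apply 0
  have hC1 : C 1 = w := by
    have hs : Deq.symm ((1 : ℝ), (0 : ℝ)) = ((1 : ℝ), (0 : ℝ)) := by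
      rw [hDeq, ContinuousLinearEquiv.symm_equivOfInverse,
        ContinuousLinearEquiv.equivOfInverse_apply]
      simp [hDinv]
    simp [hC, hLapp, hs]
  have := congrArg (fun (T : ℝ →L[ℝ] ℝ) => T 1) hzero
  simpa [hC1] using this

end

/-- for a `J`-holomorphic disk `u` through `0 ∈ M` with `∂u/∂x(0) ∈ T^J_0 M`,
and any `J`-tangent vector field `X` with `X(0) = ∂u/∂x(0)`, one has
`Δ(φ∘u)(0) = L_φ(X)(0)`. -/
theorem laplacian_eq_levi {n : ℕ} (J : E n → (E n →L[ℝ] E n)) (φ : E n → ℝ)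
    (hJsmooth : ContDiff ℝ (⊤ : ℕ∞) J) (hJ2 : ∀ x v, J x (J x v) = -v)
    (hJ0 : ∀ v : E n, J 0 v = Complex.I • v)
    (hφsmooth : ContDiff ℝ (⊤ : ℕ∞) φ) (hφ0 : φ 0 = 0)
    (hreg : ∀ x, φ x = 0 → fderiv ℝ φ x ≠ 0)
    (u : ℂ → E n) (ε : ℝ) (hu : IsJDisk J u ε) (hu0 : u 0 = 0)
    (hdir : InTJ J φ 0 (dx u 0))
    (X : E n → E n) (hX : JTangent J φ X) (hX0 : X 0 = dx u 0) :
    lap (fun z => φ (u z)) 0 = Levi J φ X 0 := by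
  have vanish : ∀ (g : E n → ℝ), DifferentiableAt ℝ g 0 → (∀ p, φ p = 0 → g p = 0) →
      ∀ w : E n, fderiv ℝ φ 0 w = 0 → fderiv ℝ g 0 w = 0 :=
    fun g hg hvan w hw => vanish_on_hypersurface hφsmooth hg hφ0 hvan (hreg 0 hφ0) hw
  have h1top : (1 : WithTop ℕ∞) ≤ ((⊤ : ℕ∞) : WithTop ℕ∞) := by
    rw [show ((1 : WithTop ℕ∞)) = (((1:ℕ∞)) : WithTop ℕ∞) from rfl]
    exact_mod_cast (le_top : (1:ℕ∞) ≤ ⊤)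
  have h2top : (2 : WithTop ℕ∞) ≤ ((⊤ : ℕ∞) : WithTop ℕ∞) := by
    rw [show ((2 : WithTop ℕ∞)) = (((2:ℕ∞)) : WithTop ℕ∞) from rfl]
    exact_mod_cast (le_top : (2:ℕ∞) ≤ ⊤)
  have htop1 : ((⊤ : ℕ∞) : WithTop ℕ∞) + 1 ≤ ((⊤ : ℕ∞) : WithTop ℕ∞) := by
    exact_mod_cast (le_top : ((⊤:ℕ∞)+1 : ℕ∞) ≤ ⊤)
  have h1top' : ((⊤ : ℕ∞) : WithTop ℕ∞) ≠ 0 := by simp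
  -- basic facts about u
  have hball : ball (0:ℂ) ε ∈ 𝓝 (0:ℂ) := isOpen_ball.mem_nhds (by simpa using hu.1)
  have huCD : ∀ᶠ z in 𝓝 (0:ℂ), ContDiffAt ℝ ((⊤:ℕ∞) : WithTop ℕ∞) u z := by
    filter_upwards [hball] with z hz
    exact hu.2.1.contDiffAt (isOpen_ball.mem_nhds hz)
  have hCR : ∀ᶠ z in 𝓝 (0:ℂ), fderiv ℝ u z Complex.I = J (u z) (fderiv ℝ u z 1) := by
    filter_upwards [hball] with z hz
    exact hu.2.2 z hz
  have huC0 : ContDiffAt ℝ ((⊤:ℕ∞) : WithTop ℕ∞) u 0 := huCD.self_of_nhds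
  have hdu : ContDiffAt ℝ ((⊤:ℕ∞) : WithTop ℕ∞) (fderiv ℝ u) 0 := huC0.fderiv_right htop1
  have hdφC : ContDiff ℝ ((⊤:ℕ∞) : WithTop ℕ∞) (fderiv ℝ φ) := hφsmooth.fderiv_right htop1
  have hφd : ∀ p : E n, DifferentiableAt ℝ φ p := fun p => (hφsmooth.differentiable h1top') p
  have hdφd : ∀ p : E n, DifferentiableAt ℝ (fderiv ℝ φ) p :=
    fun p => (hdφC.differentiable h1top') p
  have hJd : ∀ p : E n, DifferentiableAt ℝ J p := fun p => (hJsmooth.differentiable h1top') p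
  have hXd : ∀ p : E n, DifferentiableAt ℝ X p := fun p => (hX.1.differentiable h1top') p
  have hud : DifferentiableAt ℝ u 0 := huC0.differentiableAt h1top'
  have hdud : DifferentiableAt ℝ (fderiv ℝ u) 0 := hdu.differentiableAt h1top'
  -- abbreviations
  set v : E n := fderiv ℝ u 0 1 with hv
  set iv : E n := J 0 v with hivdef
  set dφ0 : E n →L[ℝ] ℝ := fderiv ℝ φ 0 with hdφ0
  set A : E n →L[ℝ] (E n →L[ℝ] ℝ) := fderiv ℝ (fderiv ℝ φ) 0 with hA
  set dJ : E n →L[ℝ] (E n →L[ℝ] E n) := fderiv ℝ J 0 with hdJ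
  set X' : E n →L[ℝ] E n := fderiv ℝ X 0 with hX'
  set B : ℂ →L[ℝ] (ℂ →L[ℝ] E n) := fderiv ℝ (fderiv ℝ u) 0 with hB
  have hX0v : X 0 = v := hX0
  have hCR0 : fderiv ℝ u 0 Complex.I = iv := by
    have := hCR.self_of_nhds
    rw [hu0] at this
    exact this
  have hdirv : dφ0 v = 0 := hdir.1
  have hdiriv : dφ0 iv = 0 := hdir.2
  -- chain rule for φ ∘ u, eventually
  have hcomp : ∀ᶠ z in 𝓝 (0:ℂ), fderiv ℝ (fun w => φ (u w)) z
      = (fderiv ℝ φ (u z)).comp (fderiv ℝ u z) := by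
    filter_upwards [huCD] with z hz
    exact fderiv_comp z (hφd (u z)) (hz.differentiableAt h1top')
  -- w2 z = ∂u/∂x
  have hw2d : DifferentiableAt ℝ (fun z => fderiv ℝ u z 1) 0 :=
    hdud.clm_apply (differentiableAt_const _)
  have hw2fd : fderiv ℝ (fun z => fderiv ℝ u z 1) 0 = B.flip 1 := fderiv_clm_apply_const' hdud 1
  -- c z = dφ(u z)
  have hcd : DifferentiableAt ℝ (fun z => fderiv ℝ φ (u z)) 0 :=
    (hdφd (u 0)).comp 0 hud
  have hcfd : fderiv ℝ (fun z => fderiv ℝ φ (u z)) 0 = A.comp (fderiv ℝ u 0) := by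
    have := fderiv_comp (𝕜 := ℝ) (g := fderiv ℝ φ) (f := u) 0 (hdφd (u 0)) hud
    rw [hu0] at this
    exact this
  -- ∂x∂x (φ∘u) at 0
  have h_ev1 : dx (fun z => φ (u z)) =ᶠ[𝓝 (0:ℂ)]
      fun z => fderiv ℝ φ (u z) (fderiv ℝ u z 1) := by
    filter_upwards [hcomp] with z hz
    show fderiv ℝ (fun w => φ (u w)) z 1 = _
    rw [hz]; rfl
  have hdxdx : dx (dx (fun z => φ (u z))) 0 = dφ0 (B 1 1) + A v v := by
    show fderiv ℝ (dx (fun z => φ (u z))) 0 1 = _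
    rw [h_ev1.fderiv_eq, fderiv_clm_apply hcd hw2d, hcfd, hw2fd]
    simp only [ContinuousLinearMap.add_apply, ContinuousLinearMap.coe_comp',
      Function.comp_apply, ContinuousLinearMap.flip_apply, hu0]
    rfl
  -- the vector field k z = J(u z) (∂u/∂x z)
  have hJud : DifferentiableAt ℝ (fun z => J (u z)) 0 := (hJd (u 0)).comp 0 hud
  have hJufd : fderiv ℝ (fun z => J (u z)) 0 = dJ.comp (fderiv ℝ u 0) := by
    have := fderiv_comp (𝕜 := ℝ) (g := J) (f := u) 0 (hJd (u 0)) hud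
    rw [hu0] at this
    exact this
  have hkd : DifferentiableAt ℝ (fun z => J (u z) (fderiv ℝ u z 1)) 0 := hJud.clm_apply hw2d
  have hkfd : ∀ b : ℂ, fderiv ℝ (fun z => J (u z) (fderiv ℝ u z 1)) 0 b
      = J 0 (B b 1) + dJ (fderiv ℝ u 0 b) v := by
    intro b
    rw [fderiv_clm_apply hJud hw2d, hJufd, hw2fd]
    simp only [ContinuousLinearMap.add_apply, ContinuousLinearMap.coe_comp',
      Function.comp_apply, ContinuousLinearMap.flip_apply, hu0]
    rfl
  -- symmetry of B and mixed derivative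
  have hsym : B Complex.I 1 = B 1 Complex.I := (huC0.isSymmSndFDerivAt (by simpa using h2top)) Complex.I 1
  have hBI : fderiv ℝ (fun z => fderiv ℝ u z Complex.I) 0 = B.flip Complex.I :=
    fderiv_clm_apply_const' hdud Complex.I
  have hmix : B 1 Complex.I = J 0 (B 1 1) + dJ v v := by
    have hev : (fun z => fderiv ℝ u z Complex.I) =ᶠ[𝓝 (0:ℂ)]
        fun z => J (u z) (fderiv ℝ u z 1) := hCR
    have h1 : B.flip Complex.I = fderiv ℝ (fun z => J (u z) (fderiv ℝ u z 1)) 0 := by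
      rw [← hBI]; exact hev.fderiv_eq
    have h2 := congrArg (fun (T : ℂ →L[ℝ] E n) => T 1) h1
    simp only [ContinuousLinearMap.flip_apply] at h2
    rw [h2, hkfd 1]
  -- ∂y∂y (φ∘u) at 0
  have h_ev2 : dy (fun z => φ (u z)) =ᶠ[𝓝 (0:ℂ)]
      fun z => fderiv ℝ φ (u z) (J (u z) (fderiv ℝ u z 1)) := by
    filter_upwards [hcomp, hCR] with z hz hz2
    show fderiv ℝ (fun w => φ (u w)) z Complex.I = _
    rw [hz]
    show fderiv ℝ φ (u z) (fderiv ℝ u z Complex.I) = _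
    rw [hz2]
  have hdydy : dy (dy (fun z => φ (u z))) 0
      = dφ0 (J 0 (B 1 Complex.I) + dJ iv v) + A iv iv := by
    show fderiv ℝ (dy (fun z => φ (u z))) 0 Complex.I = _
    rw [h_ev2.fderiv_eq, fderiv_clm_apply hcd hkd, hcfd]
    simp only [ContinuousLinearMap.add_apply, ContinuousLinearMap.coe_comp',
      Function.comp_apply, ContinuousLinearMap.flip_apply]
    rw [hkfd Complex.I, hsym, hCR0]
    simp only [hu0, hX0v]
    rfl
  -- laplacian
  have hlap : lap (fun z => φ (u z)) 0
      = A v v + A iv iv + dφ0 (J 0 (dJ v v)) + dφ0 (dJ iv v) := by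
    show dx (dx (fun z => φ (u z))) 0 + dy (dy (fun z => φ (u z))) 0 = _
    rw [hdxdx, hdydy, hmix]
    have hJJ : J 0 (J 0 (B 1 1) + dJ v v) = -(B 1 1) + J 0 (dJ v v) := by
      rw [map_add, hJ2]
    rw [hJJ, map_add, map_add, map_neg]
    ring
  -- derivative of JVF J X at 0
  have hJVFd : DifferentiableAt ℝ (JVF J X) 0 := (hJd 0).clm_apply (hXd 0)
  have hJVFfd : ∀ w : E n, fderiv ℝ (JVF J X) 0 w = J 0 (X' w) + dJ w v := by
    intro w
    show fderiv ℝ (fun p => J p (X p)) 0 w = _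
    rw [fderiv_clm_apply (hJd 0) (hXd 0)]
    simp only [ContinuousLinearMap.add_apply, ContinuousLinearMap.coe_comp',
      Function.comp_apply, ContinuousLinearMap.flip_apply, hX0v]
    rfl
  -- Levi form at 0
  have hLevi : Levi J φ X 0 = -(dφ0 (X' v)) + dφ0 (J 0 (dJ v v)) - dφ0 (J 0 (X' iv)) := by
    show dφ0 (J 0 (lie X (JVF J X) 0)) = _
    have hlie : lie X (JVF J X) 0 = J 0 (X' v) + dJ v v - X' iv := by
      show fderiv ℝ (JVF J X) 0 (X 0) - fderiv ℝ X 0 (JVF J X 0) = _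
      have hJX0 : JVF J X 0 = iv := by show J 0 (X 0) = iv; rw [hX0v]
      rw [hX0v, hJX0, hJVFfd v]
    rw [hlie, map_sub, map_add, hJ2, map_sub, map_add, map_neg]
  -- tangency identity 1
  have key1 : dφ0 (X' v) + A v v = 0 := by
    have hg1d : DifferentiableAt ℝ (fun p => fderiv ℝ φ p (X p)) 0 :=
      (hdφd 0).clm_apply (hXd 0)
    have hvan1 : ∀ p, φ p = 0 → fderiv ℝ φ p (X p) = 0 := fun p hp => (hX.2 p hp).1
    have h := vanish _ hg1d hvan1 v hdirv
    rw [fderiv_clm_apply (hdφd 0) (hXd 0)] at h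
    simp only [ContinuousLinearMap.add_apply, ContinuousLinearMap.coe_comp',
      Function.comp_apply, ContinuousLinearMap.flip_apply, hX0v] at h
    linarith [h]
  -- tangency identity 2
  have key2 : dφ0 (J 0 (X' iv) + dJ iv v) + A iv iv = 0 := by
    have hg2d : DifferentiableAt ℝ (fun p => fderiv ℝ φ p (J p (X p))) 0 :=
      (hdφd 0).clm_apply ((hJd 0).clm_apply (hXd 0))
    have hvan2 : ∀ p, φ p = 0 → fderiv ℝ φ p (J p (X p)) = 0 := fun p hp => (hX.2 p hp).2
    have h := vanish _ hg2d hvan2 iv hdiriv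
    rw [fderiv_clm_apply (hdφd 0) ((hJd 0).clm_apply (hXd 0))] at h
    simp only [ContinuousLinearMap.add_apply, ContinuousLinearMap.coe_comp',
      Function.comp_apply, ContinuousLinearMap.flip_apply, hX0v] at h
    have h2 : fderiv ℝ (fun p => J p (X p)) 0 iv = J 0 (X' iv) + dJ iv v := hJVFfd iv
    rw [h2] at h
    linarith [h]
  rw [hlap, hLevi]
  rw [map_add] at key2
  linarith [key1, key2]
end

section
/- Let k ≥ 0 and let X, Y be J-tangent vector fields such that D^{a,b}_X X(0) = D^{a,b}_Y Y(0) for all a, b ≥ 0 with a + b ≤ k. Then for all p, q ≥ 0 with p + q = k + 1, D^{p,q}_X X(0) − D^{p,q}_Y Y(0) ∈ T^J_0 M. -/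
open Complex Filter Asymptotics Metric Topology

section JetAux

noncomputable section


lemma one_le_itop : (1 : WithTop ℕ∞) ≤ ((⊤:ℕ∞) : WithTop ℕ∞) := by exact_mod_cast le_top

lemma add_one_le_itop : ((⊤:ℕ∞) : WithTop ℕ∞) + 1 ≤ ((⊤:ℕ∞) : WithTop ℕ∞) := by
  exact_mod_cast le_top

lemma itop_ne_zero : ((⊤:ℕ∞) : WithTop ℕ∞) ≠ 0 := WithTop.coe_ne_zero.mpr (by simp)

variable {n : ℕ}

lemma contDiff_nabla {V W : E n → E n} (hV : ContDiff ℝ (⊤:ℕ∞) V)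
    (hW : ContDiff ℝ (⊤:ℕ∞) W) : ContDiff ℝ (⊤:ℕ∞) (nabla V W) :=
  (hW.fderiv_right add_one_le_itop).clm_apply hV

lemma contDiff_JVF {J : E n → E n →L[ℝ] E n} {X : E n → E n}
    (hJ : ContDiff ℝ (⊤:ℕ∞) J) (hX : ContDiff ℝ (⊤:ℕ∞) X) :
    ContDiff ℝ (⊤:ℕ∞) (JVF J X) := hJ.clm_apply hX

lemma contDiff_Dpq {J : E n → E n →L[ℝ] E n} {X : E n → E n}
    (hJ : ContDiff ℝ (⊤:ℕ∞) J) (hX : ContDiff ℝ (⊤:ℕ∞) X) (p q : ℕ) :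
    ContDiff ℝ (⊤:ℕ∞) (Dpq J X p q) := by
  have base : ∀ p : ℕ, ContDiff ℝ (⊤:ℕ∞) ((nabla X)^[p] X) := by
    intro p
    induction p with
    | zero => exact hX
    | succ p ih => rw [Function.iterate_succ_apply']; exact contDiff_nabla hX ih
  unfold Dpq
  induction q with
  | zero => exact base p
  | succ q ih => rw [Function.iterate_succ_apply']; exact contDiff_nabla (contDiff_JVF hJ hX) ih

lemma Dpq_zero_zero {J : E n → E n →L[ℝ] E n} {X : E n → E n} : Dpq J X 0 0 = X := rfl

lemma Dpq_succ_left {J : E n → E n →L[ℝ] E n} {X : E n → E n} (a : ℕ) :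
    Dpq J X (a+1) 0 = nabla X (Dpq J X a 0) := by
  show (nabla X)^[a+1] X = _
  rw [Function.iterate_succ_apply']
  rfl

lemma Dpq_succ_right {J : E n → E n →L[ℝ] E n} {X : E n → E n} (a b : ℕ) :
    Dpq J X a (b+1) = nabla (JVF J X) (Dpq J X a b) := by
  unfold Dpq
  rw [Function.iterate_succ_apply']

/-- scalar directional derivative along a field -/
def Lsc {n : ℕ} (V : E n → E n) (h : E n → ℝ) : E n → ℝ := fun x => fderiv ℝ h x (V x)

lemma contDiff_Lsc {V : E n → E n} {h : E n → ℝ} (hV : ContDiff ℝ (⊤:ℕ∞) V)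
    (hh : ContDiff ℝ (⊤:ℕ∞) h) : ContDiff ℝ (⊤:ℕ∞) (Lsc V h) :=
  (hh.fderiv_right add_one_le_itop).clm_apply hV

lemma Lsc_sub {V : E n → E n} {h f : E n → ℝ} (hh : ContDiff ℝ (⊤:ℕ∞) h)
    (hf : ContDiff ℝ (⊤:ℕ∞) f) (x : E n) : Lsc V (h - f) x = Lsc V h x - Lsc V f x := by
  have : fderiv ℝ (fun y => h y - f y) x = fderiv ℝ h x - fderiv ℝ f x :=
    fderiv_sub (hh.differentiable itop_ne_zero x) (hf.differentiable itop_ne_zero x)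
  simp only [Lsc]
  rw [show h - f = fun y => h y - f y from rfl, this]
  simp

lemma lsc_clm_apply {c : E n → (E n →L[ℝ] ℝ)} (hc : ContDiff ℝ (⊤:ℕ∞) c) {Z : E n → E n}
    (hZ : ContDiff ℝ (⊤:ℕ∞) Z) (V : E n → E n) (x : E n) :
    Lsc V (fun y => c y (Z y)) x
      = (fderiv ℝ c x (V x)) (Z x) + c x (nabla V Z x) := by
  have h := fderiv_clm_apply (𝕜 := ℝ) (c := c) (u := Z)
    (hc.differentiable itop_ne_zero x) (hZ.differentiable itop_ne_zero x)
  simp only [Lsc, h, ContinuousLinearMap.add_apply, ContinuousLinearMap.comp_apply,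
    ContinuousLinearMap.flip_apply, nabla]
  ring

section Key
set_option linter.unusedSectionVars false
variable {E' : Type*} [NormedAddCommGroup E'] [NormedSpace ℝ E'] [CompleteSpace E']

lemma range_eq_top_of_ne_zero (f : E' →L[ℝ] ℝ) (hf : f ≠ 0) : f.range = ⊤ := by
  obtain ⟨x, hx⟩ : ∃ x, f x ≠ 0 := by
    by_contra h
    push_neg at h
    exact hf (ContinuousLinearMap.ext fun x => by simp [h x])
  rw [LinearMap.range_eq_top]
  intro c
  exact ⟨(c / f x) • x, by simp [map_smul]; field_simp⟩

lemma fderiv_zero_of_tangent {φ : E' → ℝ} (hφ : ContDiff ℝ (⊤:ℕ∞) φ)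
    {g : E' → ℝ} (hg : ContDiff ℝ (⊤:ℕ∞) g) (hgM : ∀ x, φ x = 0 → g x = 0)
    {p : E'} (hp : φ p = 0) (hreg : fderiv ℝ φ p ≠ 0)
    {v : E'} (hv : fderiv ℝ φ p v = 0) : fderiv ℝ g p v = 0 := by
  set f' := fderiv ℝ φ p with hf'
  have hstrict : HasStrictFDerivAt φ f' p := hφ.contDiffAt.hasStrictFDerivAt itop_ne_zero
  have hrange : f'.range = ⊤ := range_eq_top_of_ne_zero f' hreg
  set ψ : ℝ → f'.ker → E' := hstrict.implicitFunction φ f' hrange with hψ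
  have hder : HasStrictFDerivAt (ψ (φ p)) (f'.ker).subtypeL 0 :=
    hstrict.to_implicitFunction hrange
  have hev : ∀ᶠ y : f'.ker in 𝓝 0, φ (ψ (φ p) y) = φ p := by
    have h1 := hstrict.map_implicitFunction_eq hrange
    have htend : Tendsto (fun y : f'.ker => ((φ p : ℝ), y)) (𝓝 0) (𝓝 (φ p, 0)) :=
      Continuous.tendsto' (continuous_const.prodMk continuous_id) 0 (φ p, 0) rfl
    exact htend.eventually h1
  have hgz : (fun y : f'.ker => g (ψ (φ p) y)) =ᶠ[𝓝 0] fun _ => (0:ℝ) :=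
    hev.mono fun y hy => hgM _ (by rw [hy, hp])
  have him : ψ (φ p) 0 = p := hstrict.implicitFunction_apply_image hrange
  have hgd : HasFDerivAt (fun y => g (ψ (φ p) y))
      ((fderiv ℝ g p).comp (f'.ker).subtypeL) 0 := by
    have h2 : HasFDerivAt g (fderiv ℝ g p) (ψ (φ p) 0) := by
      rw [him]; exact (hg.differentiable itop_ne_zero p).hasFDerivAt
    exact h2.comp 0 hder.hasFDerivAt
  have hzero : HasFDerivAt (fun y : f'.ker => g (ψ (φ p) y))
      (0 : ↥(f'.ker) →L[ℝ] ℝ) 0 :=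
    (hasFDerivAt_const (0:ℝ) (0 : ↥(f'.ker))).congr_of_eventuallyEq hgz
  have hcomp : (fderiv ℝ g p).comp (f'.ker).subtypeL = 0 := hgd.unique hzero
  have hvm : v ∈ f'.ker := LinearMap.mem_ker.2 hv
  have : ((fderiv ℝ g p).comp (f'.ker).subtypeL) ⟨v, hvm⟩ = 0 := by rw [hcomp]; rfl
  simpa [ContinuousLinearMap.comp_apply] using this

end Key

end

noncomputable section


variable {n : ℕ}

/-- smooth function vanishing on `M = φ⁻¹ 0` -/
def VanM {n : ℕ} (φ : E n → ℝ) (h : E n → ℝ) : Prop :=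
  ContDiff ℝ (⊤:ℕ∞) h ∧ ∀ x, φ x = 0 → h x = 0

lemma VanM.lsc {φ : E n → ℝ} (hφ : ContDiff ℝ (⊤:ℕ∞) φ)
    (hreg : ∀ x, φ x = 0 → fderiv ℝ φ x ≠ 0) {V : E n → E n}
    (hV : ContDiff ℝ (⊤:ℕ∞) V) (hVt : ∀ x, φ x = 0 → fderiv ℝ φ x (V x) = 0)
    {h : E n → ℝ} (hh : VanM φ h) : VanM φ (Lsc V h) :=
  ⟨contDiff_Lsc hV hh.1, fun x hx =>
    fderiv_zero_of_tangent hφ hh.1 hh.2 hx (hreg x hx) (hVt x hx)⟩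

/-- `f` and `g` are a common smooth expression evaluated on the admissible
jet data of `X` resp. `Y`. -/
def ElemP {n : ℕ} (J : E n → (E n →L[ℝ] E n)) (X Y : E n → E n) (P : ℕ → ℕ → Prop)
    (f g : E n → ℝ) : Prop :=
  ∃ (ι : Type) (_ : Fintype ι) (a b : ι → ℕ) (Φ : E n × (ι → E n) → ℝ),
    ContDiff ℝ (⊤:ℕ∞) Φ ∧ (∀ i, P (a i) (b i)) ∧
    f = (fun x => Φ (x, fun i => Dpq J X (a i) (b i) x)) ∧
    g = (fun x => Φ (x, fun i => Dpq J Y (a i) (b i) x))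

variable {J : E n → E n →L[ℝ] E n} {X Y : E n → E n} {P P' : ℕ → ℕ → Prop} {f g : E n → ℝ}

lemma ElemP_zero : ElemP J X Y P (fun _ => 0) (fun _ => 0) :=
  ⟨Empty, inferInstance, fun i => i.elim, fun i => i.elim, fun _ => 0, contDiff_const,
    fun i => i.elim, rfl, rfl⟩

lemma ElemP_mono (hPP : ∀ a b, P a b → P' a b) (h : ElemP J X Y P f g) :
    ElemP J X Y P' f g := by
  obtain ⟨ι, hι, a, b, Φ, hΦ, hab, hf, hg⟩ := h
  exact ⟨ι, hι, a, b, Φ, hΦ, fun i => hPP _ _ (hab i), hf, hg⟩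

lemma ElemP_add {f' g' : E n → ℝ} (h : ElemP J X Y P f g) (h' : ElemP J X Y P f' g') :
    ElemP J X Y P (f + f') (g + g') := by
  obtain ⟨ι, hι, a, b, Φ, hΦ, hab, hf, hg⟩ := h
  obtain ⟨ι', hι', a', b', Φ', hΦ', hab', hf', hg'⟩ := h'
  classical
  refine ⟨ι ⊕ ι', inferInstance, Sum.elim a a', Sum.elim b b',
    (fun pr => Φ (pr.1, fun i => pr.2 (Sum.inl i)) + Φ' (pr.1, fun i => pr.2 (Sum.inr i))),
    ?_, ?_, ?_, ?_⟩
  · apply ContDiff.add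
    · exact hΦ.comp (contDiff_fst.prodMk (contDiff_pi.2 fun i =>
        (contDiff_apply ℝ (E n) (Sum.inl i)).comp contDiff_snd))
    · exact hΦ'.comp (contDiff_fst.prodMk (contDiff_pi.2 fun i =>
        (contDiff_apply ℝ (E n) (Sum.inr i)).comp contDiff_snd))
  · rintro (i | i)
    · exact hab i
    · exact hab' i
  · funext x; simp [hf, hf']
  · funext x; simp [hg, hg']

lemma ElemP_smooth (hJ : ContDiff ℝ (⊤:ℕ∞) J) (hX : ContDiff ℝ (⊤:ℕ∞) X)
    (hY : ContDiff ℝ (⊤:ℕ∞) Y) (h : ElemP J X Y P f g) :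
    ContDiff ℝ (⊤:ℕ∞) f ∧ ContDiff ℝ (⊤:ℕ∞) g := by
  obtain ⟨ι, hι, a, b, Φ, hΦ, hab, hf, hg⟩ := h
  constructor
  · rw [hf]
    exact hΦ.comp (contDiff_id.prodMk (contDiff_pi.2 fun i => contDiff_Dpq hJ hX _ _))
  · rw [hg]
    exact hΦ.comp (contDiff_id.prodMk (contDiff_pi.2 fun i => contDiff_Dpq hJ hY _ _))

lemma ElemP_eval {k : ℕ} (hjet : ∀ a b, a + b ≤ k → Dpq J X a b 0 = Dpq J Y a b 0)
    (hPk : ∀ a b, P a b → a + b ≤ k) (h : ElemP J X Y P f g) : f 0 = g 0 := by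
  obtain ⟨ι, hι, a, b, Φ, hΦ, hab, hf, hg⟩ := h
  rw [hf, hg]
  show Φ (0, fun i => Dpq J X (a i) (b i) 0) = Φ (0, fun i => Dpq J Y (a i) (b i) 0)
  congr 1
  refine Prod.ext rfl ?_
  funext i
  exact hjet _ _ (hPk _ _ (hab i))

/-- the correction term coming from differentiating `c` -/
lemma ElemP_corr {c : E n → (E n →L[ℝ] ℝ)} (hc : ContDiff ℝ (⊤:ℕ∞) c)
    {Ψ : E n × E n → E n} (hΨ : ContDiff ℝ (⊤:ℕ∞) Ψ)
    {V W : E n → E n} (hV : ∀ x, V x = Ψ (x, X x)) (hW : ∀ x, W x = Ψ (x, Y x))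
    {p q : ℕ} (h00 : P 0 0) (hpq : P p q) :
    ElemP J X Y P (fun x => fderiv ℝ c x (V x) (Dpq J X p q x))
      (fun x => fderiv ℝ c x (W x) (Dpq J Y p q x)) := by
  refine ⟨Bool, inferInstance, fun i => if i then 0 else p, fun i => if i then 0 else q,
    (fun pr => fderiv ℝ c pr.1 (Ψ (pr.1, pr.2 true)) (pr.2 false)), ?_, ?_, ?_, ?_⟩
  · refine ContDiff.clm_apply ?_ ((contDiff_apply ℝ (E n) false).comp contDiff_snd)
    refine ContDiff.clm_apply ((hc.fderiv_right add_one_le_itop).comp contDiff_fst) ?_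
    exact hΨ.comp (contDiff_fst.prodMk ((contDiff_apply ℝ (E n) true).comp contDiff_snd))
  · rintro (_ | _) <;> simpa
  · funext x; simp [hV x, Dpq_zero_zero]
  · funext x; simp [hW x, Dpq_zero_zero]

end

noncomputable section


variable {n : ℕ} {J : E n → E n →L[ℝ] E n}

/-- chain rule for a smooth expression composed with jet data -/
lemma lsc_comp_eval {ι : Type} [Fintype ι] (a b a' b' : ι → ℕ)
    {Φ : E n × (ι → E n) → ℝ} (hΦ : ContDiff ℝ (⊤:ℕ∞) Φ)
    (hJ : ContDiff ℝ (⊤:ℕ∞) J) {X V : E n → E n} (hX : ContDiff ℝ (⊤:ℕ∞) X)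
    (hd : ∀ i, nabla V (Dpq J X (a i) (b i)) = Dpq J X (a' i) (b' i)) (x : E n) :
    Lsc V (fun y => Φ (y, fun i => Dpq J X (a i) (b i) y)) x
      = fderiv ℝ Φ (x, fun i => Dpq J X (a i) (b i) x)
          (V x, fun i => Dpq J X (a' i) (b' i) x) := by
  set G : E n → E n × (ι → E n) := fun y => (y, fun i => Dpq J X (a i) (b i) y) with hG
  set G' : E n →L[ℝ] E n × (ι → E n) :=
    (ContinuousLinearMap.id ℝ (E n)).prod
      (ContinuousLinearMap.pi fun i => fderiv ℝ (Dpq J X (a i) (b i)) x) with hG'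
  have hGd : HasFDerivAt G G' x := by
    refine HasFDerivAt.prodMk (hasFDerivAt_id x) ?_
    exact hasFDerivAt_pi.2 fun i =>
      ((contDiff_Dpq hJ hX (a i) (b i)).differentiable itop_ne_zero x).hasFDerivAt
  have hΦd : HasFDerivAt Φ (fderiv ℝ Φ (G x)) (G x) :=
    (hΦ.differentiable itop_ne_zero (G x)).hasFDerivAt
  have hcomp : HasFDerivAt (fun y => Φ (G y)) ((fderiv ℝ Φ (G x)).comp G') x :=
    hΦd.comp x hGd
  have : Lsc V (fun y => Φ (G y)) x = (fderiv ℝ Φ (G x)) (G' (V x)) := by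
    simp only [Lsc, hcomp.fderiv, ContinuousLinearMap.comp_apply]
  rw [show (fun y => Φ (y, fun i => Dpq J X (a i) (b i) y)) = fun y => Φ (G y) from rfl, this]
  congr 1
  show (V x, fun i => fderiv ℝ (Dpq J X (a i) (b i)) x (V x)) = _
  refine Prod.ext rfl ?_
  funext i
  have := congrFun (hd i) x
  simpa [nabla] using this

lemma ElemP_lsc {X Y V W : E n → E n}
    (hJ : ContDiff ℝ (⊤:ℕ∞) J) (hX : ContDiff ℝ (⊤:ℕ∞) X) (hY : ContDiff ℝ (⊤:ℕ∞) Y)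
    {Ψ : E n × E n → E n} (hΨ : ContDiff ℝ (⊤:ℕ∞) Ψ)
    (hV : ∀ x, V x = Ψ (x, X x)) (hW : ∀ x, W x = Ψ (x, Y x))
    {P P' : ℕ → ℕ → Prop} {st : ℕ → ℕ → ℕ × ℕ}
    (hst : ∀ a b, P a b →
      nabla V (Dpq J X a b) = Dpq J X (st a b).1 (st a b).2 ∧
      nabla W (Dpq J Y a b) = Dpq J Y (st a b).1 (st a b).2 ∧
      P' (st a b).1 (st a b).2)
    (hP : ∀ a b, P a b → P' a b) (h00 : P' 0 0)
    {f g : E n → ℝ} (h : ElemP J X Y P f g) :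
    ElemP J X Y P' (Lsc V f) (Lsc W g) := by
  obtain ⟨ι, hι, a, b, Φ, hΦ, hab, hf, hg⟩ := h
  classical
  refine ⟨Option (ι ⊕ ι), inferInstance,
    (fun i => match i with
      | none => 0 | some (.inl i) => a i | some (.inr i) => (st (a i) (b i)).1),
    (fun i => match i with
      | none => 0 | some (.inl i) => b i | some (.inr i) => (st (a i) (b i)).2),
    (fun pr => fderiv ℝ Φ (pr.1, fun i => pr.2 (some (Sum.inl i)))
        (Ψ (pr.1, pr.2 none), fun i => pr.2 (some (Sum.inr i)))),
    ?_, ?_, ?_, ?_⟩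
  · have hbase : ContDiff ℝ (⊤:ℕ∞)
        (fun pr : E n × (Option (ι ⊕ ι) → E n) =>
          (pr.1, fun i : ι => pr.2 (some (Sum.inl i)))) :=
      contDiff_fst.prodMk (contDiff_pi.2 fun i =>
        (contDiff_apply ℝ (E n) (some (Sum.inl i))).comp contDiff_snd)
    have hdir : ContDiff ℝ (⊤:ℕ∞)
        (fun pr : E n × (Option (ι ⊕ ι) → E n) =>
          (Ψ (pr.1, pr.2 none), fun i : ι => pr.2 (some (Sum.inr i)))) := by
      refine ContDiff.prodMk ?_ (contDiff_pi.2 fun i =>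
        (contDiff_apply ℝ (E n) (some (Sum.inr i))).comp contDiff_snd)
      exact hΨ.comp (contDiff_fst.prodMk ((contDiff_apply ℝ (E n) none).comp contDiff_snd))
    exact (((hΦ.fderiv_right add_one_le_itop).comp hbase).clm_apply hdir)
  · rintro (_ | i | i)
    · exact h00
    · exact hP _ _ (hab i)
    · exact (hst _ _ (hab i)).2.2
  · funext x
    rw [hf, lsc_comp_eval a b (fun i => (st (a i) (b i)).1) (fun i => (st (a i) (b i)).2) hΦ hJ hX
      (fun i => (hst _ _ (hab i)).1) x]
    rw [hV x]
    rfl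
  · funext x
    rw [hg, lsc_comp_eval a b (fun i => (st (a i) (b i)).1) (fun i => (st (a i) (b i)).2) hΦ hJ hY
      (fun i => (hst _ _ (hab i)).2.1) x]
    rw [hW x]
    rfl

end

noncomputable section


variable {n : ℕ} {J : E n → E n →L[ℝ] E n} {φ : E n → ℝ}

def Expand {n : ℕ} (J : E n → E n →L[ℝ] E n) (φ : E n → ℝ) (X Y : E n → E n)
    (c : E n → (E n →L[ℝ] ℝ)) (P : ℕ → ℕ → Prop) (p q : ℕ) : Prop :=
  ∃ h h' f g, VanM φ h ∧ VanM φ h' ∧ ElemP J X Y P f g ∧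
    (fun x => c x (Dpq J X p q x)) = h - f ∧ (fun x => c x (Dpq J Y p q x)) = h' - g

lemma Expand.mono {X Y : E n → E n} {c : E n → (E n →L[ℝ] ℝ)} {P P' : ℕ → ℕ → Prop} {p q : ℕ}
    (hPP : ∀ a b, P a b → P' a b) (h : Expand J φ X Y c P p q) : Expand J φ X Y c P' p q := by
  obtain ⟨h, h', f, g, H1, H2, H3, H4, H5⟩ := h
  exact ⟨h, h', f, g, H1, H2, ElemP_mono hPP H3, H4, H5⟩

lemma Expand.step {X Y V W : E n → E n} {c : E n → (E n →L[ℝ] ℝ)}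
    (hφ : ContDiff ℝ (⊤:ℕ∞) φ) (hreg : ∀ x, φ x = 0 → fderiv ℝ φ x ≠ 0)
    (hc : ContDiff ℝ (⊤:ℕ∞) c)
    (hJ : ContDiff ℝ (⊤:ℕ∞) J) (hX : ContDiff ℝ (⊤:ℕ∞) X) (hY : ContDiff ℝ (⊤:ℕ∞) Y)
    (hVs : ContDiff ℝ (⊤:ℕ∞) V) (hWs : ContDiff ℝ (⊤:ℕ∞) W)
    (hVt : ∀ x, φ x = 0 → fderiv ℝ φ x (V x) = 0)
    (hWt : ∀ x, φ x = 0 → fderiv ℝ φ x (W x) = 0)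
    {Ψ : E n × E n → E n} (hΨ : ContDiff ℝ (⊤:ℕ∞) Ψ)
    (hV : ∀ x, V x = Ψ (x, X x)) (hW : ∀ x, W x = Ψ (x, Y x))
    {P P' : ℕ → ℕ → Prop} {st : ℕ → ℕ → ℕ × ℕ}
    (hst : ∀ a b, P a b →
      nabla V (Dpq J X a b) = Dpq J X (st a b).1 (st a b).2 ∧
      nabla W (Dpq J Y a b) = Dpq J Y (st a b).1 (st a b).2 ∧
      P' (st a b).1 (st a b).2)
    (hP : ∀ a b, P a b → P' a b) (h00 : P' 0 0)
    {p q p' q' : ℕ} (hpq : P' p q)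
    (hDX : Dpq J X p' q' = nabla V (Dpq J X p q))
    (hDY : Dpq J Y p' q' = nabla W (Dpq J Y p q))
    (h : Expand J φ X Y c P p q) : Expand J φ X Y c P' p' q' := by
  obtain ⟨h, h', f, g, H1, H2, H3, H4, H5⟩ := h
  have hfg := ElemP_smooth hJ hX hY H3
  refine ⟨Lsc V h, Lsc W h',
    Lsc V f + (fun x => fderiv ℝ c x (V x) (Dpq J X p q x)),
    Lsc W g + (fun x => fderiv ℝ c x (W x) (Dpq J Y p q x)),
    VanM.lsc hφ hreg hVs hVt H1, VanM.lsc hφ hreg hWs hWt H2,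
    ElemP_add (ElemP_lsc hJ hX hY hΨ hV hW hst hP h00 H3)
      (ElemP_corr hc hΨ hV hW h00 hpq), ?_, ?_⟩
  · funext x
    have l1 : Lsc V (fun y => c y (Dpq J X p q y)) x
        = fderiv ℝ c x (V x) (Dpq J X p q x) + c x (nabla V (Dpq J X p q) x) :=
      lsc_clm_apply hc (contDiff_Dpq hJ hX p q) V x
    rw [H4] at l1
    rw [Lsc_sub H1.1 hfg.1 x] at l1
    simp only [Pi.sub_apply, Pi.add_apply, hDX]
    linarith [l1]
  · funext x
    have l1 : Lsc W (fun y => c y (Dpq J Y p q y)) x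
        = fderiv ℝ c x (W x) (Dpq J Y p q x) + c x (nabla W (Dpq J Y p q) x) :=
      lsc_clm_apply hc (contDiff_Dpq hJ hY p q) W x
    rw [H5] at l1
    rw [Lsc_sub H2.1 hfg.2 x] at l1
    simp only [Pi.sub_apply, Pi.add_apply, hDY]
    linarith [l1]

lemma expand_all {X Y : E n → E n} {c : E n → (E n →L[ℝ] ℝ)}
    (hφ : ContDiff ℝ (⊤:ℕ∞) φ) (hreg : ∀ x, φ x = 0 → fderiv ℝ φ x ≠ 0)
    (hc : ContDiff ℝ (⊤:ℕ∞) c)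
    (hJ : ContDiff ℝ (⊤:ℕ∞) J)
    (hX : JTangent J φ X) (hY : JTangent J φ Y)
    (hαX : ∀ x, φ x = 0 → c x (X x) = 0) (hαY : ∀ x, φ x = 0 → c x (Y x) = 0)
    (p q : ℕ) : Expand J φ X Y c (fun a b => a + b + 1 ≤ p + q) p q := by
  have hXs := hX.1
  have hYs := hY.1
  have hXt : ∀ x, φ x = 0 → fderiv ℝ φ x (X x) = 0 := fun x hx => (hX.2 x hx).1
  have hYt : ∀ x, φ x = 0 → fderiv ℝ φ x (Y x) = 0 := fun x hx => (hY.2 x hx).1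
  have hJXt : ∀ x, φ x = 0 → fderiv ℝ φ x (JVF J X x) = 0 := fun x hx => (hX.2 x hx).2
  have hJYt : ∀ x, φ x = 0 → fderiv ℝ φ x (JVF J Y x) = 0 := fun x hx => (hY.2 x hx).2
  -- Phase 1 : pure X-derivatives
  have phase1 : ∀ p : ℕ, Expand J φ X Y c (fun a b => b = 0 ∧ a + 1 ≤ p) p 0 := by
    intro p
    induction p with
    | zero =>
      refine ⟨(fun x => c x (X x)), (fun x => c x (Y x)), (fun _ => 0), (fun _ => 0),
        ⟨hc.clm_apply hXs, hαX⟩, ⟨hc.clm_apply hYs, hαY⟩, ElemP_zero, ?_, ?_⟩ <;>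
      · funext x; simp [Dpq_zero_zero]
    | succ p ih =>
      refine Expand.step hφ hreg hc hJ hXs hYs hXs hYs hXt hYt
        (Ψ := fun pr => pr.2) contDiff_snd (fun x => rfl) (fun x => rfl)
        (st := fun a _ => (a + 1, 0)) ?_ ?_ ?_ ?_ (Dpq_succ_left p) (Dpq_succ_left p) ih
      · rintro a b ⟨rfl, hb⟩
        exact ⟨(Dpq_succ_left a).symm, (Dpq_succ_left a).symm, by dsimp only; exact ⟨rfl, by omega⟩⟩
      · rintro a b ⟨rfl, hb⟩; exact ⟨rfl, by omega⟩
      · exact ⟨rfl, by omega⟩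
      · exact ⟨rfl, by omega⟩
  -- Phase 2 : J X-derivatives
  induction q with
  | zero =>
    refine (phase1 p).mono ?_
    rintro a b ⟨rfl, hb⟩
    omega
  | succ q ih =>
    refine Expand.step hφ hreg hc hJ hXs hYs (contDiff_JVF hJ hXs) (contDiff_JVF hJ hYs)
      hJXt hJYt (Ψ := fun pr => J pr.1 pr.2)
      (((hJ.comp contDiff_fst)).clm_apply contDiff_snd) (fun x => rfl) (fun x => rfl)
      (st := fun a b => (a, b + 1)) ?_ ?_ ?_ ?_ (Dpq_succ_right p q) (Dpq_succ_right p q) ih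
    · intro a b hab
      exact ⟨(Dpq_succ_right a b).symm, (Dpq_succ_right a b).symm, by dsimp only; omega⟩
    · intro a b hab; omega
    · omega
    · omega

end

end JetAux

/-- if two `J`-tangent vector fields have the same derivatives
`D^{a,b} (0)` for `a + b ≤ k`, then for `p + q = k + 1` the difference
`D^{p,q}_X X(0) − D^{p,q}_Y Y(0)` lies in `T^J_0 M`. -/
theorem jet_difference_tangent {n : ℕ} (J : E n → (E n →L[ℝ] E n)) (φ : E n → ℝ)
    (hJsmooth : ContDiff ℝ (⊤ : ℕ∞) J) (hJ2 : ∀ x v, J x (J x v) = -v)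
    (hJ0 : ∀ v : E n, J 0 v = Complex.I • v)
    (hφsmooth : ContDiff ℝ (⊤ : ℕ∞) φ) (hφ0 : φ 0 = 0)
    (hreg : ∀ x, φ x = 0 → fderiv ℝ φ x ≠ 0)
    (k : ℕ) (X Y : E n → E n) (hX : JTangent J φ X) (hY : JTangent J φ Y)
    (hjet : ∀ a b : ℕ, a + b ≤ k → Dpq J X a b 0 = Dpq J Y a b 0) :
    ∀ p q : ℕ, p + q = k + 1 → InTJ J φ 0 (Dpq J X p q 0 - Dpq J Y p q 0) := by
  intro p q hpq
  have main : ∀ c : E n → (E n →L[ℝ] ℝ), ContDiff ℝ (⊤:ℕ∞) c →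
      (∀ x, φ x = 0 → c x (X x) = 0) → (∀ x, φ x = 0 → c x (Y x) = 0) →
      c 0 (Dpq J X p q 0) = c 0 (Dpq J Y p q 0) := by
    intro c hc hcx hcy
    obtain ⟨h, h', f, g, H1, H2, H3, H4, H5⟩ :=
      expand_all hφsmooth hreg hc hJsmooth hX hY hcx hcy p q
    have e1 : c 0 (Dpq J X p q 0) = h 0 - f 0 := by
      have := congrFun H4 0; simpa using this
    have e2 : c 0 (Dpq J Y p q 0) = h' 0 - g 0 := by
      have := congrFun H5 0; simpa using this
    have hfg : f 0 = g 0 := ElemP_eval hjet (fun a b hab => by omega) H3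
    rw [e1, e2, H1.2 0 hφ0, H2.2 0 hφ0, hfg]
  constructor
  · have h1 := main (fderiv ℝ φ) (hφsmooth.fderiv_right add_one_le_itop)
      (fun x hx => (hX.2 x hx).1) (fun x hx => (hY.2 x hx).1)
    rw [map_sub]
    simpa [sub_eq_zero] using h1
  · have h2 := main (fun x => (fderiv ℝ φ x).comp (J x))
      ((hφsmooth.fderiv_right add_one_le_itop).clm_comp hJsmooth)
      (fun x hx => (hX.2 x hx).2) (fun x hx => (hY.2 x hx).2)
    rw [map_sub (J 0), map_sub]
    simp only [ContinuousLinearMap.comp_apply] at h2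
    simpa [sub_eq_zero] using h2
end

section
/- Let X be a J-tangent vector field and let k ≥ 2. The following are equivalent: (a) every iterated Lie bracket of the vector fields X and JX with at least 2 and at most k factors vanishes at 0; (b) for every m ≤ k − 2 and every choice X₁, …, X_m ∈ {X, JX}, one has (X₁·⋯·X_m·[X, JX])(0) = 0 (for m = 0 this means [X, JX](0) = 0). -/
open Complex Filter Asymptotics Metric Topology

noncomputable section MyAux
variable {n : ℕ}

lemma h1top : ((⊤ : ℕ∞) : WithTop ℕ∞) ≠ 0 := by simp

lemma contDiff_nabla_s14 {A B : E n → E n} (hA : ContDiff ℝ (⊤:ℕ∞) A) (hB : ContDiff ℝ (⊤:ℕ∞) B) :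
    ContDiff ℝ (⊤:ℕ∞) (nabla A B) := (hB.fderiv_right (le_refl _)).clm_apply hA

lemma contDiff_lie {A B : E n → E n} (hA : ContDiff ℝ (⊤:ℕ∞) A) (hB : ContDiff ℝ (⊤:ℕ∞) B) :
    ContDiff ℝ (⊤:ℕ∞) (lie A B) := (contDiff_nabla_s14 hA hB).sub (contDiff_nabla_s14 hB hA)

def dlist (l : List (E n → E n)) (W : E n → E n) : E n → E n := l.foldr nabla W

lemma dlist_concat (l : List (E n → E n)) (Y W : E n → E n) :
    dlist (l ++ [Y]) W = dlist l (nabla Y W) := by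
  simp [dlist, List.foldr_append]

lemma prodVF_cons (a : E n → E n) (l : List (E n → E n)) (h : l ≠ []) :
    prodVF (a :: l) = nabla a (prodVF l) := by
  cases l with
  | nil => exact absurd rfl h
  | cons b t => rfl

lemma prodVF_eq_dlist (l : List (E n → E n)) (W : E n → E n) :
    prodVF (l ++ [W]) = dlist l W := by
  induction l with
  | nil => rfl
  | cons a t ih => rw [List.cons_append, prodVF_cons a (t ++ [W]) (by simp), ih]; rfl

lemma contDiff_dlist {l : List (E n → E n)} (hl : ∀ Z ∈ l, ContDiff ℝ (⊤:ℕ∞) Z)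
    {W : E n → E n} (hW : ContDiff ℝ (⊤:ℕ∞) W) : ContDiff ℝ (⊤:ℕ∞) (dlist l W) := by
  induction l with
  | nil => exact hW
  | cons a t ih =>
    exact contDiff_nabla_s14 (hl a (by simp)) (ih (fun Z hZ => hl Z (by simp [hZ])))

lemma dlist_add {l : List (E n → E n)} (hl : ∀ Z ∈ l, ContDiff ℝ (⊤:ℕ∞) Z)
    {F G : E n → E n} (hF : ContDiff ℝ (⊤:ℕ∞) F) (hG : ContDiff ℝ (⊤:ℕ∞) G) :
    dlist l (fun p => F p + G p) = fun p => dlist l F p + dlist l G p := by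
  induction l with
  | nil => rfl
  | cons a t ih =>
    have ht : ∀ Z ∈ t, ContDiff ℝ (⊤:ℕ∞) Z := fun Z hZ => hl Z (by simp [hZ])
    show nabla a (dlist t fun p => F p + G p) = _
    rw [ih ht]
    funext p
    show fderiv ℝ (fun q => dlist t F q + dlist t G q) p (a p) = _
    rw [fderiv_fun_add (((contDiff_dlist ht hF).differentiable h1top).differentiableAt)
      (((contDiff_dlist ht hG).differentiable h1top).differentiableAt)]
    rfl

lemma dlist_neg (l : List (E n → E n)) (F : E n → E n) :
    dlist l (fun p => -(F p)) = fun p => -(dlist l F p) := by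
  induction l with
  | nil => rfl
  | cons a t ih =>
    show nabla a (dlist t fun p => -(F p)) = _
    rw [ih]
    funext p
    show fderiv ℝ (fun q => -(dlist t F q)) p (a p) = _
    rw [fderiv_fun_neg]
    rfl

lemma dlist_zero (l : List (E n → E n)) : dlist l (fun _ => (0 : E n)) = fun _ => 0 := by
  induction l with
  | nil => rfl
  | cons a t ih =>
    show nabla a (dlist t fun _ => (0:E n)) = _
    rw [ih]
    funext p
    show fderiv ℝ (fun _ => (0:E n)) p (a p) = _
    simp


lemma nabla_comm {Y₁ W Y : E n → E n} (hY₁ : ContDiff ℝ (⊤:ℕ∞) Y₁)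
    (hW : ContDiff ℝ (⊤:ℕ∞) W) (hY : ContDiff ℝ (⊤:ℕ∞) Y) :
    nabla Y₁ (nabla W Y) = fun p => nabla W (nabla Y₁ Y) p + nabla (lie Y₁ W) Y p := by
  funext p
  have hdY : ContDiff ℝ (⊤:ℕ∞) (fderiv ℝ Y) := hY.fderiv_right (le_refl _)
  have hdYd : DifferentiableAt ℝ (fderiv ℝ Y) p := (hdY.differentiable h1top).differentiableAt
  have hWd : DifferentiableAt ℝ W p := (hW.differentiable h1top).differentiableAt
  have hY₁d : DifferentiableAt ℝ Y₁ p := (hY₁.differentiable h1top).differentiableAt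
  have L : nabla Y₁ (nabla W Y) p
      = fderiv ℝ Y p (fderiv ℝ W p (Y₁ p)) + fderiv ℝ (fderiv ℝ Y) p (Y₁ p) (W p) := by
    show fderiv ℝ (fun q => (fderiv ℝ Y q) (W q)) p (Y₁ p) = _
    rw [fderiv_clm_apply hdYd hWd]
    simp
  have R1 : nabla W (nabla Y₁ Y) p
      = fderiv ℝ Y p (fderiv ℝ Y₁ p (W p)) + fderiv ℝ (fderiv ℝ Y) p (W p) (Y₁ p) := by
    show fderiv ℝ (fun q => (fderiv ℝ Y q) (Y₁ q)) p (W p) = _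
    rw [fderiv_clm_apply hdYd hY₁d]
    simp
  have R2 : nabla (lie Y₁ W) Y p
      = fderiv ℝ Y p (fderiv ℝ W p (Y₁ p)) - fderiv ℝ Y p (fderiv ℝ Y₁ p (W p)) := by
    show fderiv ℝ Y p (lie Y₁ W p) = _
    simp [lie, nabla]
  have sym : fderiv ℝ (fderiv ℝ Y) p (Y₁ p) (W p) = fderiv ℝ (fderiv ℝ Y) p (W p) (Y₁ p) :=
    second_derivative_symmetric (fun y => (hY.differentiable h1top y).hasFDerivAt)
      hdYd.hasFDerivAt _ _
  rw [L, R1, R2, sym]; abel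


def Good (A B : E n → E n) (l : List (E n → E n)) : Prop := ∀ Z ∈ l, Z = A ∨ Z = B

def Flat (A B : E n → E n) (r : ℕ) (W : E n → E n) : Prop :=
  ∀ l, Good A B l → l.length ≤ r → dlist l W 0 = 0

variable {A B : E n → E n}

lemma good_smooth (hA : ContDiff ℝ (⊤:ℕ∞) A) (hB : ContDiff ℝ (⊤:ℕ∞) B)
    {l : List (E n → E n)} (hl : Good A B l) : ∀ Z ∈ l, ContDiff ℝ (⊤:ℕ∞) Z := by
  intro Z hZ; rcases hl Z hZ with h | h <;> subst h <;> assumption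

lemma good_concat {l : List (E n → E n)} (hl : Good A B l) {Y : E n → E n}
    (hY : Y = A ∨ Y = B) : Good A B (l ++ [Y]) := by
  intro Z hZ
  rcases List.mem_append.mp hZ with h | h
  · exact hl Z h
  · simp at h; subst h; exact hY

lemma flat_mono {r r' : ℕ} (h : r' ≤ r) {W : E n → E n} (hF : Flat A B r W) :
    Flat A B r' W := fun l hl hlen => hF l hl (le_trans hlen h)

lemma flat_add (hA : ContDiff ℝ (⊤:ℕ∞) A) (hB : ContDiff ℝ (⊤:ℕ∞) B)
    {r : ℕ} {F G : E n → E n} (hFs : ContDiff ℝ (⊤:ℕ∞) F) (hGs : ContDiff ℝ (⊤:ℕ∞) G)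
    (hF : Flat A B r F) (hG : Flat A B r G) : Flat A B r (fun p => F p + G p) := by
  intro l hl hlen
  rw [dlist_add (good_smooth hA hB hl) hFs hGs]
  show dlist l F 0 + dlist l G 0 = 0
  rw [hF l hl hlen, hG l hl hlen, add_zero]

lemma flat_neg {r : ℕ} {F : E n → E n} (hF : Flat A B r F) :
    Flat A B r (fun p => -(F p)) := by
  intro l hl hlen
  rw [dlist_neg]
  show -(dlist l F 0) = 0
  rw [hF l hl hlen, neg_zero]

lemma flat_zero {r : ℕ} : Flat A B r (fun _ => (0:E n)) := by
  intro l hl hlen; rw [dlist_zero]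

/-- Key propagation lemma: if `W` is `r`-flat then so is `∇_W Y` for any smooth `Y`. -/
lemma flat_nabla (hA : ContDiff ℝ (⊤:ℕ∞) A) (hB : ContDiff ℝ (⊤:ℕ∞) B) :
    ∀ r (W Y : E n → E n), ContDiff ℝ (⊤:ℕ∞) W → ContDiff ℝ (⊤:ℕ∞) Y →
      Flat A B r W → Flat A B r (nabla W Y) := by
  intro r
  induction r with
  | zero =>
    intro W Y hW hY hF l hl hlen
    have : l = [] := List.eq_nil_of_length_eq_zero (Nat.le_zero.mp hlen)
    subst this
    show nabla W Y 0 = 0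
    have h0 : W 0 = 0 := hF [] (by intro Z hZ; simp at hZ) (by simp)
    show fderiv ℝ Y 0 (W 0) = 0
    rw [h0, map_zero]
  | succ r IH =>
    intro W Y hW hY hF l hl hlen
    rcases List.eq_nil_or_concat l with rfl | ⟨t, Y₁, rfl⟩
    · show nabla W Y 0 = 0
      have h0 : W 0 = 0 := hF [] (by intro Z hZ; simp at hZ) (by simp)
      show fderiv ℝ Y 0 (W 0) = 0
      rw [h0, map_zero]
    · rw [List.concat_eq_append] at *
      have ht : Good A B t := fun Z hZ => hl Z (by simp [hZ])
      have hY₁g : Y₁ = A ∨ Y₁ = B := hl Y₁ (by simp)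
      have hY₁s : ContDiff ℝ (⊤:ℕ∞) Y₁ := by rcases hY₁g with h | h <;> subst h <;> assumption
      have hlt : t.length ≤ r := by
        simp only [List.length_append, List.length_cons, List.length_nil] at hlen; omega
      have hFr : Flat A B r W := flat_mono (Nat.le_succ r) hF
      have hW' : Flat A B r (lie Y₁ W) := by
        have e : lie Y₁ W = fun p => nabla Y₁ W p + (-(nabla W Y₁ p)) :=
          funext fun p => sub_eq_add_neg _ _
        rw [e]
        apply flat_add hA hB (contDiff_nabla_s14 hY₁s hW) (contDiff_nabla_s14 hW hY₁s).neg
        · intro l' hl' hlen'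
          rw [← dlist_concat]
          exact hF (l' ++ [Y₁]) (good_concat hl' hY₁g) (by simp; omega)
        · exact flat_neg (IH W Y₁ hW hY₁s hFr)
      rw [dlist_concat, nabla_comm hY₁s hW hY,
        dlist_add (good_smooth hA hB ht) (contDiff_nabla_s14 hW (contDiff_nabla_s14 hY₁s hY))
          (contDiff_nabla_s14 (contDiff_lie hY₁s hW) hY)]
      show dlist t (nabla W (nabla Y₁ Y)) 0 + dlist t (nabla (lie Y₁ W) Y) 0 = 0
      rw [IH W (nabla Y₁ Y) hW (contDiff_nabla_s14 hY₁s hY) hFr t ht hlt,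
        IH (lie Y₁ W) Y (contDiff_lie hY₁s hW) hY hW' t ht hlt, add_zero]

lemma iterbrk_one_le {S : Set (E n → E n)} {m : ℕ} {W : E n → E n}
    (h : IterBrk S m W) : 1 ≤ m := by
  induction h with
  | base W hW => exact le_refl 1
  | brk h₁ h₂ ih₁ ih₂ => omega

lemma iterbrk_eq_of_one {m : ℕ} {W : E n → E n}
    (h : IterBrk {A, B} m W) (hm : m = 1) : W = A ∨ W = B := by
  induction h with
  | base W hW => simpa using hW
  | brk h₁ h₂ ih₁ ih₂ =>
    exfalso
    have := iterbrk_one_le h₁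
    have := iterbrk_one_le h₂
    omega

lemma iterbrk_smooth (hA : ContDiff ℝ (⊤:ℕ∞) A) (hB : ContDiff ℝ (⊤:ℕ∞) B)
    {m : ℕ} {W : E n → E n} (h : IterBrk {A, B} m W) : ContDiff ℝ (⊤:ℕ∞) W := by
  induction h with
  | base W hW => rcases (by simpa using hW : W = A ∨ W = B) with h | h <;> subst h <;> assumption
  | brk h₁ h₂ ih₁ ih₂ => exact contDiff_lie ih₁ ih₂

lemma flat_nabla_gen {r : ℕ} {Y W : E n → E n} (hY : Y = A ∨ Y = B)
    (hF : Flat A B (r + 1) W) : Flat A B r (nabla Y W) := by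
  intro l hl hlen
  rw [← dlist_concat]
  exact hF (l ++ [Y]) (good_concat hl hY) (by simp; omega)

lemma flat_lie_gen {r : ℕ} (hAB : Flat A B r (lie A B)) {Y₁ Y₂ : E n → E n}
    (h₁ : Y₁ = A ∨ Y₁ = B) (h₂ : Y₂ = A ∨ Y₂ = B) : Flat A B r (lie Y₁ Y₂) := by
  have hzero : ∀ C : E n → E n, Flat A B r (lie C C) := by
    intro C
    have e : lie C C = fun _ => (0 : E n) := funext fun p => sub_self _
    rw [e]; exact flat_zero
  have hBA : Flat A B r (lie B A) := by
    have e : lie B A = fun p => -(lie A B p) := funext fun p => (neg_sub _ _).symm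
    rw [e]; exact flat_neg hAB
  rcases h₁ with e1 | e1 <;> rcases h₂ with e2 | e2 <;> rw [e1, e2]
  · exact hzero A
  · exact hAB
  · exact hBA
  · exact hzero B

lemma flat_lie (hA : ContDiff ℝ (⊤:ℕ∞) A) (hB : ContDiff ℝ (⊤:ℕ∞) B)
    {r : ℕ} {W₁ W₂ : E n → E n} (hs₁ : ContDiff ℝ (⊤:ℕ∞) W₁) (hs₂ : ContDiff ℝ (⊤:ℕ∞) W₂)
    (H12 : Flat A B r (nabla W₁ W₂)) (H21 : Flat A B r (nabla W₂ W₁)) :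
    Flat A B r (lie W₁ W₂) := by
  have e : lie W₁ W₂ = fun p => nabla W₁ W₂ p + (-(nabla W₂ W₁ p)) :=
    funext fun p => sub_eq_add_neg _ _
  rw [e]
  exact flat_add hA hB (contDiff_nabla_s14 hs₁ hs₂) (contDiff_nabla_s14 hs₂ hs₁).neg H12 (flat_neg H21)

/-- Main lemma for (b) → (a). -/
lemma mainB (hA : ContDiff ℝ (⊤:ℕ∞) A) (hB : ContDiff ℝ (⊤:ℕ∞) B) {k : ℕ}
    (hAB : Flat A B (k - 2) (lie A B)) :
    ∀ {m : ℕ} {W : E n → E n}, IterBrk {A, B} m W → 2 ≤ m → m ≤ k → Flat A B (k - m) W := by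
  intro m W h
  induction h with
  | base W hW => intro h2 _; omega
  | @brk m₁ m₂ W₁ W₂ h₁ h₂ ih₁ ih₂ =>
    intro _ hmk
    have hm₁ := iterbrk_one_le h₁
    have hm₂ := iterbrk_one_le h₂
    have hs₁ := iterbrk_smooth hA hB h₁
    have hs₂ := iterbrk_smooth hA hB h₂
    rcases Nat.lt_or_ge m₁ 2 with hc₁ | hc₁ <;> rcases Nat.lt_or_ge m₂ 2 with hc₂ | hc₂
    · -- m₁ = m₂ = 1
      have e₁ : m₁ = 1 := by omega
      have e₂ : m₂ = 1 := by omega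
      exact flat_lie_gen (flat_mono (by omega) hAB)
        (iterbrk_eq_of_one h₁ e₁) (iterbrk_eq_of_one h₂ e₂)
    · -- m₁ = 1, m₂ ≥ 2
      have e₁ : m₁ = 1 := by omega
      have hg₁ := iterbrk_eq_of_one h₁ e₁
      have hF₂ : Flat A B (k - m₂) W₂ := ih₂ hc₂ (by omega)
      refine flat_lie hA hB hs₁ hs₂ ?_ ?_
      · exact flat_nabla_gen hg₁ (flat_mono (by omega) hF₂)
      · exact flat_mono (by omega) (flat_nabla hA hB _ W₂ W₁ hs₂ hs₁ hF₂)
    · -- m₁ ≥ 2, m₂ = 1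
      have e₂ : m₂ = 1 := by omega
      have hg₂ := iterbrk_eq_of_one h₂ e₂
      have hF₁ : Flat A B (k - m₁) W₁ := ih₁ hc₁ (by omega)
      refine flat_lie hA hB hs₁ hs₂ ?_ ?_
      · exact flat_mono (by omega) (flat_nabla hA hB _ W₁ W₂ hs₁ hs₂ hF₁)
      · exact flat_nabla_gen hg₂ (flat_mono (by omega) hF₁)
    · -- both ≥ 2
      have hF₁ : Flat A B (k - m₁) W₁ := ih₁ hc₁ (by omega)
      have hF₂ : Flat A B (k - m₂) W₂ := ih₂ hc₂ (by omega)
      refine flat_lie hA hB hs₁ hs₂ ?_ ?_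
      · exact flat_mono (by omega) (flat_nabla hA hB _ W₁ W₂ hs₁ hs₂ hF₁)
      · exact flat_mono (by omega) (flat_nabla hA hB _ W₂ W₁ hs₂ hs₁ hF₂)

/-- Main lemma for (a) → (b). -/
lemma mainA (hA : ContDiff ℝ (⊤:ℕ∞) A) (hB : ContDiff ℝ (⊤:ℕ∞) B) {k : ℕ}
    (Ha : ∀ (m : ℕ) (W : E n → E n), 2 ≤ m → m ≤ k → IterBrk {A, B} m W → W 0 = 0) :
    ∀ (s m : ℕ) (W : E n → E n), IterBrk {A, B} m W → 2 ≤ m →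
      ∀ l, Good A B l → l.length = s → m + s ≤ k → dlist l W 0 = 0 := by
  intro s
  induction s using Nat.strong_induction_on with
  | _ s ih =>
    intro m W hW h2 l hl hlen hmk
    rcases List.eq_nil_or_concat l with rfl | ⟨t, Y, rfl⟩
    · exact Ha m W h2 (by simp at hlen; omega) hW
    · rw [List.concat_eq_append] at *
      have ht : Good A B t := fun Z hZ => hl Z (by simp [hZ])
      have hYg : Y = A ∨ Y = B := hl Y (by simp)
      have hYs : ContDiff ℝ (⊤:ℕ∞) Y := by rcases hYg with h | h <;> subst h <;> assumption
      have hWs := iterbrk_smooth hA hB hW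
      have hts : t.length + 1 = s := by simpa using hlen
      rw [dlist_concat]
      have hsplit : nabla Y W = fun p => lie Y W p + nabla W Y p := by
        funext p
        have : lie Y W p = nabla Y W p - nabla W Y p := rfl
        rw [this, sub_add_cancel]
      rw [hsplit, dlist_add (good_smooth hA hB ht) (contDiff_lie hYs hWs)
        (contDiff_nabla_s14 hWs hYs)]
      show dlist t (lie Y W) 0 + dlist t (nabla W Y) 0 = 0
      have hYmem : Y ∈ ({A, B} : Set (E n → E n)) := by
        rcases hYg with rfl | rfl <;> simp
      have h1 : dlist t (lie Y W) 0 = 0 :=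
        ih t.length (by omega) (1 + m) (lie Y W) (IterBrk.brk (IterBrk.base Y hYmem) hW)
          (by omega) t ht rfl (by omega)
      have hFlat : Flat A B t.length W := by
        intro l' hl' hlen'
        exact ih l'.length (by omega) m W hW h2 l' hl' rfl (by omega)
      have h2' : dlist t (nabla W Y) 0 = 0 :=
        flat_nabla hA hB t.length W Y hWs hYs hFlat t ht (le_refl _)
      rw [h1, h2', add_zero]

end MyAux

/-- all iterated Lie brackets of `X` and `JX` with `2, …, k` factors vanish
at `0` iff all derivatives `X₁·⋯·X_m·[X, JX]` with `m ≤ k − 2` and `X_i ∈ {X, JX}` vanish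
at `0`. -/
theorem brackets_vanish_iff_derivatives_of_bracket {n : ℕ}
    (J : E n → (E n →L[ℝ] E n)) (φ : E n → ℝ)
    (hJsmooth : ContDiff ℝ (⊤ : ℕ∞) J) (hJ2 : ∀ x v, J x (J x v) = -v)
    (hJ0 : ∀ v : E n, J 0 v = Complex.I • v)
    (hφsmooth : ContDiff ℝ (⊤ : ℕ∞) φ) (hφ0 : φ 0 = 0)
    (hreg : ∀ x, φ x = 0 → fderiv ℝ φ x ≠ 0)
    (X : E n → E n) (hX : JTangent J φ X) (k : ℕ) (hk : 2 ≤ k) :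
    (∀ (m : ℕ) (W : E n → E n), 2 ≤ m → m ≤ k →
        IterBrk {X, JVF J X} m W → W 0 = 0) ↔
    (∀ l : List (E n → E n), l.length ≤ k - 2 → (∀ W ∈ l, W = X ∨ W = JVF J X) →
        prodVF (l ++ [lie X (JVF J X)]) 0 = 0) := by
  obtain ⟨hXs, -⟩ := hX
  have hJXs : ContDiff ℝ (⊤:ℕ∞) (JVF J X) := hJsmooth.clm_apply hXs
  constructor
  · intro Ha l hlen hgood
    rw [prodVF_eq_dlist]
    exact mainA hXs hJXs Ha l.length 2 (lie X (JVF J X))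
      (IterBrk.brk (IterBrk.base X (by simp)) (IterBrk.base (JVF J X) (by simp)))
      (le_refl 2) l hgood rfl (by omega)
  · intro Hb m W h2 hk' hW
    have hFlatB : Flat X (JVF J X) (k - 2) (lie X (JVF J X)) := by
      intro l hl hlen
      have := Hb l hlen hl
      rwa [prodVF_eq_dlist] at this
    exact mainB hXs hJXs hFlatB hW h2 hk' [] (fun Z hZ => by simp at hZ) (by simp)
end

section
/- Fix integers p, q ≥ 0. Let u and v be J-holomorphic disks with u(0) = v(0) = 0 and (∂^m u/∂x^m)(0) = (∂^m v/∂x^m)(0) for all 1 ≤ m ≤ p + q + 1. Then (∂^{p+q}/∂x^p ∂y^q)[Δ(φ∘u)](0) = (∂^{p+q}/∂x^p ∂y^q)[Δ(φ∘v)](0), where Δ = ∂²/∂x² + ∂²/∂y². In other words, the (p,q)-derivative at 0 of the Laplacian of φ∘u depends only on the derivatives of u in the x-direction at 0 up to order p+q+1 (this is what makes the (p,q)-th Levi form L^{p,q} : (ℝ^{2n})^{p+q+1} → ℝ well defined). -/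
open Complex Filter Asymptotics Metric Topology

noncomputable section AuxLevi
open Function

variable {F : Type*} [NormedAddCommGroup F] [NormedSpace ℝ F]

lemma contDiff_dx {f : ℂ → F} (hf : ContDiff ℝ (⊤:ℕ∞) f) : ContDiff ℝ (⊤:ℕ∞) (dx f) :=
  (hf.fderiv_right (by simp)).clm_apply contDiff_const

lemma contDiff_dy {f : ℂ → F} (hf : ContDiff ℝ (⊤:ℕ∞) f) : ContDiff ℝ (⊤:ℕ∞) (dy f) :=
  (hf.fderiv_right (by simp)).clm_apply contDiff_const

lemma contDiff_dx_iter {f : ℂ → F} (hf : ContDiff ℝ (⊤:ℕ∞) f) (m : ℕ) :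
    ContDiff ℝ (⊤:ℕ∞) (dx^[m] f) := by
  induction m with
  | zero => exact hf
  | succ m ih => rw [iterate_succ_apply']; exact contDiff_dx ih

-- Schwarz
lemma dx_dy_comm {f : ℂ → F} (hf : ContDiff ℝ (⊤:ℕ∞) f) (z : ℂ) :
    dx (dy f) z = dy (dx f) z := by
  have hdf : ContDiff ℝ (⊤:ℕ∞) (fderiv ℝ f) := hf.fderiv_right (by simp)
  have h1 : ∀ (w : ℂ), fderiv ℝ (fun z' => fderiv ℝ f z' w) z
      = (fderiv ℝ (fderiv ℝ f) z).flip w := by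
    intro w
    have := fderiv_clm_apply (c := fderiv ℝ f) (u := fun _ => w)
      (hdf.differentiable (by simp) z) (differentiableAt_const w)
    simpa [fderiv_const] using this
  have hsym : fderiv ℝ (fderiv ℝ f) z 1 Complex.I = fderiv ℝ (fderiv ℝ f) z Complex.I 1 := by
    have := (hf.contDiffAt (x := z)).isSymmSndFDerivAt (by rw [minSmoothness_of_isRCLikeNormedField]; exact WithTop.coe_le_coe.2 (le_top : (2:ℕ∞) ≤ ⊤))
    exact this 1 Complex.I
  show fderiv ℝ (dy f) z 1 = fderiv ℝ (dx f) z Complex.I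
  rw [show dy f = fun z' => fderiv ℝ f z' Complex.I from rfl,
      show dx f = fun z' => fderiv ℝ f z' 1 from rfl, h1, h1]
  simpa using hsym
variable {n : ℕ} {F : Type*} [NormedAddCommGroup F] [NormedSpace ℝ F]

/-- vector of iterated x-derivatives of `u`: index `i` is `∂^i u/∂x^i`. -/
def gvec (u : ℂ → E n) (k : ℕ) : ℂ → (Fin k → E n) := fun z i => dx^[(i:ℕ)] u z

def dxStep {k : ℕ} (H : (Fin k → E n) → F) : (Fin (k+1) → E n) → F :=
  fun w => fderiv ℝ H (fun i => w i.castSucc) (fun i => w i.succ)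

def Gm (J : E n → (E n →L[ℝ] E n)) : (m : ℕ) → ((Fin (m+2) → E n) → E n)
  | 0 => fun w => J (w 0) (w 1)
  | m+1 => dxStep (Gm J m)

def dyStep (J : E n → (E n →L[ℝ] E n)) {k : ℕ} (H : (Fin k → E n) → F) :
    (Fin (k+1) → E n) → F :=
  fun w => fderiv ℝ H (fun i => w i.castSucc)
    (fun i : Fin k => Gm J (i:ℕ) (fun j : Fin ((i:ℕ)+2) => w (Fin.castLE (Nat.succ_le_succ i.isLt) j)))

def dxN {k : ℕ} : (m : ℕ) → ((Fin k → E n) → F) → ((Fin (k+m) → E n) → F)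
  | 0, H => H
  | m+1, H => dxStep (dxN m H)

def dyN (J : E n → (E n →L[ℝ] E n)) {k : ℕ} :
    (m : ℕ) → ((Fin k → E n) → F) → ((Fin (k+m) → E n) → F)
  | 0, H => H
  | m+1, H => dyStep J (dyN J m H)

-- smoothness
lemma contDiff_proj_comp {k l : ℕ} (σ : Fin l → Fin k) :
    ContDiff ℝ (⊤:ℕ∞) (fun w : Fin k → E n => fun i => w (σ i)) :=
  contDiff_pi.2 fun i => contDiff_apply (𝕜 := ℝ) (E := E n) (σ i)

lemma contDiff_dxStep {k : ℕ} {H : (Fin k → E n) → F} (hH : ContDiff ℝ (⊤:ℕ∞) H) :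
    ContDiff ℝ (⊤:ℕ∞) (dxStep H) :=
  ((hH.fderiv_right (by simp)).comp (contDiff_proj_comp Fin.castSucc)).clm_apply
    (contDiff_proj_comp Fin.succ)

lemma contDiff_Gm {J : E n → (E n →L[ℝ] E n)} (hJ : ContDiff ℝ (⊤:ℕ∞) J) :
    ∀ m, ContDiff ℝ (⊤:ℕ∞) (Gm J m)
  | 0 => (hJ.comp (contDiff_apply (𝕜 := ℝ) (E := E n) (0 : Fin 2))).clm_apply
      (contDiff_apply (𝕜 := ℝ) (E := E n) (1 : Fin 2))
  | m+1 => contDiff_dxStep (contDiff_Gm hJ m)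

lemma contDiff_dyStep {J : E n → (E n →L[ℝ] E n)} (hJ : ContDiff ℝ (⊤:ℕ∞) J)
    {k : ℕ} {H : (Fin k → E n) → F} (hH : ContDiff ℝ (⊤:ℕ∞) H) :
    ContDiff ℝ (⊤:ℕ∞) (dyStep J H) :=
  ((hH.fderiv_right (by simp)).comp (contDiff_proj_comp Fin.castSucc)).clm_apply
    (contDiff_pi.2 fun i => (contDiff_Gm hJ (i:ℕ)).comp (contDiff_proj_comp _))

lemma contDiff_dxN {k : ℕ} {H : (Fin k → E n) → F} (hH : ContDiff ℝ (⊤:ℕ∞) H) :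
    ∀ m, ContDiff ℝ (⊤:ℕ∞) (dxN m H)
  | 0 => hH
  | m+1 => contDiff_dxStep (contDiff_dxN hH m)

lemma contDiff_dyN {J : E n → (E n →L[ℝ] E n)} (hJ : ContDiff ℝ (⊤:ℕ∞) J)
    {k : ℕ} {H : (Fin k → E n) → F} (hH : ContDiff ℝ (⊤:ℕ∞) H) :
    ∀ m, ContDiff ℝ (⊤:ℕ∞) (dyN J m H)
  | 0 => hH
  | m+1 => contDiff_dyStep hJ (contDiff_dyN hJ hH m)

variable {n : ℕ}

lemma fderiv_comp_dir {𝔼 𝔽 𝔾 : Type*} [NormedAddCommGroup 𝔼] [NormedSpace ℝ 𝔼]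
    [NormedAddCommGroup 𝔽] [NormedSpace ℝ 𝔽] [NormedAddCommGroup 𝔾] [NormedSpace ℝ 𝔾]
    {H : 𝔽 → 𝔾} {g : 𝔼 → 𝔽} {z : 𝔼} (hH : DifferentiableAt ℝ H (g z))
    (hg : DifferentiableAt ℝ g z) (w : 𝔼) :
    fderiv ℝ (fun z => H (g z)) z w = fderiv ℝ H (g z) (fderiv ℝ g z w) := by
  rw [show (fun z => H (g z)) = H ∘ g from rfl, fderiv_comp z hH hg]; rfl

lemma contDiff_gvec {u : ℂ → E n} (hu : ContDiff ℝ (⊤:ℕ∞) u) (k : ℕ) :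
    ContDiff ℝ (⊤:ℕ∞) (gvec u k) :=
  contDiff_pi.2 fun i => contDiff_dx_iter hu (i:ℕ)

lemma fderiv_gvec_apply {u : ℂ → E n} (hu : ContDiff ℝ (⊤:ℕ∞) u) (k : ℕ) (z w : ℂ) :
    fderiv ℝ (gvec u k) z w = fun i : Fin k => fderiv ℝ (dx^[(i:ℕ)] u) z w := by
  have h := fderiv_pi (𝕜 := ℝ) (φ := fun (i : Fin k) z => dx^[(i:ℕ)] u z) (x := z)
    (fun i => ((contDiff_dx_iter hu (i:ℕ)).differentiable (by simp)).differentiableAt)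
  show fderiv ℝ (fun z (i : Fin k) => dx^[(i:ℕ)] u z) z w = _
  rw [h]; rfl

lemma dx_comp {k : ℕ} {H : (Fin k → E n) → F} (hH : ContDiff ℝ (⊤:ℕ∞) H)
    {u : ℂ → E n} (hu : ContDiff ℝ (⊤:ℕ∞) u) (z : ℂ) :
    dx (fun z => H (gvec u k z)) z = dxStep H (gvec u (k+1) z) := by
  have h1 : dx (fun z => H (gvec u k z)) z
      = fderiv ℝ H (gvec u k z) (fderiv ℝ (gvec u k) z 1) :=
    fderiv_comp_dir ((hH.differentiable (by simp)).differentiableAt)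
      (((contDiff_gvec hu k).differentiable (by simp)).differentiableAt) 1
  rw [h1, fderiv_gvec_apply hu k z 1]
  show _ = fderiv ℝ H (fun i => gvec u (k+1) z i.castSucc) (fun i => gvec u (k+1) z i.succ)
  congr 1
  funext i
  have h2 : dx^[(i:ℕ)] (dx u) z = dx (dx^[(i:ℕ)] u) z := by
    rw [← iterate_succ_apply, iterate_succ_apply']
  show dx (dx^[(i:ℕ)] u) z = dx^[(i:ℕ)] (dx u) z
  exact h2.symm

section CR
variable {J : E n → (E n →L[ℝ] E n)} {u : ℂ → E n} {s : Set ℂ}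

lemma dy_dx_iter (hJ : ContDiff ℝ (⊤:ℕ∞) J) (hu : ContDiff ℝ (⊤:ℕ∞) u) (hs : IsOpen s)
    (hCR : ∀ z ∈ s, dy u z = J (u z) (dx u z)) :
    ∀ m, ∀ z ∈ s, dy (dx^[m] u) z = Gm J m (gvec u (m+2) z) := by
  intro m
  induction m with
  | zero =>
    intro z hz
    show dy u z = J (gvec u 2 z 0) (gvec u 2 z 1)
    exact hCR z hz
  | succ m ih =>
    intro z hz
    have hfm : ContDiff ℝ (⊤:ℕ∞) (dx^[m] u) := contDiff_dx_iter hu m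
    have e1 : dy (dx^[m+1] u) z = dy (dx (dx^[m] u)) z := by
      rw [iterate_succ_apply']
    have e2 : dy (dx (dx^[m] u)) z = dx (dy (dx^[m] u)) z := (dx_dy_comm hfm z).symm
    have e3 : dx (dy (dx^[m] u)) z = dx (fun z' => Gm J m (gvec u (m+2) z')) z := by
      show fderiv ℝ _ z 1 = fderiv ℝ _ z 1
      rw [Filter.EventuallyEq.fderiv_eq
        (Filter.eventuallyEq_of_mem (hs.mem_nhds hz) (fun z' hz' => ih z' hz'))]
    rw [e1, e2, e3, dx_comp (contDiff_Gm hJ m) hu z]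
    rfl

lemma dy_comp (hJ : ContDiff ℝ (⊤:ℕ∞) J) (hu : ContDiff ℝ (⊤:ℕ∞) u) (hs : IsOpen s)
    (hCR : ∀ z ∈ s, dy u z = J (u z) (dx u z))
    {k : ℕ} {H : (Fin k → E n) → F} (hH : ContDiff ℝ (⊤:ℕ∞) H) :
    ∀ z ∈ s, dy (fun z => H (gvec u k z)) z = dyStep J H (gvec u (k+1) z) := by
  intro z hz
  have h1 : dy (fun z => H (gvec u k z)) z
      = fderiv ℝ H (gvec u k z) (fderiv ℝ (gvec u k) z Complex.I) :=
    fderiv_comp_dir ((hH.differentiable (by simp)).differentiableAt)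
      (((contDiff_gvec hu k).differentiable (by simp)).differentiableAt) Complex.I
  rw [h1, fderiv_gvec_apply hu k z Complex.I]
  show _ = fderiv ℝ H (fun i => gvec u (k+1) z i.castSucc)
    (fun i : Fin k => Gm J (i:ℕ)
      (fun j : Fin ((i:ℕ)+2) => gvec u (k+1) z (Fin.castLE (Nat.succ_le_succ i.isLt) j)))
  congr 1
  funext i
  have h2 := dy_dx_iter hJ hu hs hCR (i:ℕ) z hz
  show dy (dx^[(i:ℕ)] u) z = _
  rw [h2]
  rfl

end CR

lemma dx_iter_comp {u : ℂ → E n} (hu : ContDiff ℝ (⊤:ℕ∞) u)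
    {k : ℕ} {H : (Fin k → E n) → F} (hH : ContDiff ℝ (⊤:ℕ∞) H) :
    ∀ p z, dx^[p] (fun z => H (gvec u k z)) z = dxN p H (gvec u (k+p) z) := by
  intro p
  induction p with
  | zero => intro z; rfl
  | succ p ih =>
    intro z
    rw [iterate_succ_apply']
    have : dx^[p] (fun z => H (gvec u k z)) = fun z => dxN p H (gvec u (k+p) z) := funext ih
    rw [this, dx_comp (contDiff_dxN hH p) hu z]
    rfl

lemma dy_iter_comp {J : E n → (E n →L[ℝ] E n)} {u : ℂ → E n} {s : Set ℂ}
    (hJ : ContDiff ℝ (⊤:ℕ∞) J) (hu : ContDiff ℝ (⊤:ℕ∞) u) (hs : IsOpen s)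
    (hCR : ∀ z ∈ s, dy u z = J (u z) (dx u z))
    {k : ℕ} {H : (Fin k → E n) → F} (hH : ContDiff ℝ (⊤:ℕ∞) H) :
    ∀ q, ∀ z ∈ s, dy^[q] (fun z => H (gvec u k z)) z = dyN J q H (gvec u (k+q) z) := by
  intro q
  induction q with
  | zero => intro z _; rfl
  | succ q ih =>
    intro z hz
    rw [iterate_succ_apply']
    have e3 : dy (dy^[q] (fun z => H (gvec u k z))) z
        = dy (fun z' => dyN J q H (gvec u (k+q) z')) z := by
      show fderiv ℝ _ z Complex.I = fderiv ℝ _ z Complex.I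
      rw [Filter.EventuallyEq.fderiv_eq
        (Filter.eventuallyEq_of_mem (hs.mem_nhds hz) (fun z' hz' => ih z' hz'))]
    rw [e3, dy_comp hJ hu hs hCR (contDiff_dyN hJ hH q) z hz]
    rfl

-- germ lemmas
variable {f g : ℂ → F} {s : Set ℂ}

lemma eqOn_dx (hs : IsOpen s) (h : Set.EqOn f g s) : Set.EqOn (dx f) (dx g) s := by
  intro z hz
  show fderiv ℝ f z 1 = fderiv ℝ g z 1
  rw [Filter.EventuallyEq.fderiv_eq (Filter.eventuallyEq_of_mem (hs.mem_nhds hz) h)]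

lemma eqOn_dy (hs : IsOpen s) (h : Set.EqOn f g s) : Set.EqOn (dy f) (dy g) s := by
  intro z hz
  show fderiv ℝ f z Complex.I = fderiv ℝ g z Complex.I
  rw [Filter.EventuallyEq.fderiv_eq (Filter.eventuallyEq_of_mem (hs.mem_nhds hz) h)]

lemma eqOn_dx_iter (hs : IsOpen s) (h : Set.EqOn f g s) (m : ℕ) :
    Set.EqOn (dx^[m] f) (dx^[m] g) s := by
  induction m with
  | zero => exact h
  | succ m ih => rw [iterate_succ_apply', iterate_succ_apply']; exact eqOn_dx hs ih

lemma eqOn_dy_iter (hs : IsOpen s) (h : Set.EqOn f g s) (m : ℕ) :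
    Set.EqOn (dy^[m] f) (dy^[m] g) s := by
  induction m with
  | zero => exact h
  | succ m ih => rw [iterate_succ_apply', iterate_succ_apply']; exact eqOn_dy hs ih

lemma exists_smooth_extension {u : ℂ → E n} {ε : ℝ} (hε : 0 < ε)
    (hu : ContDiffOn ℝ (⊤:ℕ∞) u (ball (0:ℂ) ε)) :
    ∃ w : ℂ → E n, ContDiff ℝ (⊤:ℕ∞) w ∧ Set.EqOn w u (ball (0:ℂ) (ε/4)) := by
  let bump : ContDiffBump (0:ℂ) := ⟨ε/4, ε/2, by positivity, by linarith⟩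
  refine ⟨fun z => bump z • u z, ?_, ?_⟩
  · rw [contDiff_iff_contDiffAt]
    intro x
    by_cases hx : x ∈ ball (0:ℂ) ε
    · exact (bump.contDiff.contDiffAt).smul (hu.contDiffAt (isOpen_ball.mem_nhds hx))
    · have hx2 : (ε/2) < dist x 0 := by
        simp only [mem_ball] at hx; linarith [not_lt.1 hx]
      have hopen : IsOpen {z : ℂ | (ε/2) < dist z 0} := by
        have : Continuous fun z : ℂ => dist z 0 := (continuous_id.dist continuous_const)
        exact isOpen_lt continuous_const this
      refine (contDiffAt_const (c := (0 : E n))).congr_of_eventuallyEq ?_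
      filter_upwards [hopen.mem_nhds hx2] with z hz
      rw [bump.zero_of_le_dist (by rw [show bump.rOut = ε/2 from rfl]; exact le_of_lt hz), zero_smul]
  · intro z hz
    have h1 : bump z = 1 := bump.one_of_mem_closedBall (by rw [show bump.rIn = ε/4 from rfl]; exact ball_subset_closedBall hz)
    simp [h1]

def LeviH (J : E n → (E n →L[ℝ] E n)) (φ : E n → ℝ) : (Fin 2 → E n) → ℝ :=
  fun w => fderiv ℝ (fderiv ℝ φ) (w 0) (w 1) (w 1)
    + fderiv ℝ (fderiv ℝ φ) (w 0) (J (w 0) (w 1)) (J (w 0) (w 1))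
    + fderiv ℝ φ (w 0)
        (fderiv ℝ J (w 0) (J (w 0) (w 1)) (w 1) + J (w 0) (fderiv ℝ J (w 0) (w 1) (w 1)))

lemma contDiff_LeviH {J : E n → (E n →L[ℝ] E n)} {φ : E n → ℝ}
    (hJ : ContDiff ℝ (⊤:ℕ∞) J) (hφ : ContDiff ℝ (⊤:ℕ∞) φ) :
    ContDiff ℝ (⊤:ℕ∞) (LeviH J φ) := by
  have p0 : ContDiff ℝ (⊤:ℕ∞) (fun w : Fin 2 → E n => w 0) :=
    contDiff_apply (𝕜 := ℝ) (E := E n) (0 : Fin 2)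
  have p1 : ContDiff ℝ (⊤:ℕ∞) (fun w : Fin 2 → E n => w 1) :=
    contDiff_apply (𝕜 := ℝ) (E := E n) (1 : Fin 2)
  have hdφ : ContDiff ℝ (⊤:ℕ∞) (fderiv ℝ φ) := hφ.fderiv_right (by simp)
  have hd2φ : ContDiff ℝ (⊤:ℕ∞) (fderiv ℝ (fderiv ℝ φ)) := hdφ.fderiv_right (by simp)
  have hdJ : ContDiff ℝ (⊤:ℕ∞) (fderiv ℝ J) := hJ.fderiv_right (by simp)
  have hJw : ContDiff ℝ (⊤:ℕ∞) (fun w : Fin 2 → E n => J (w 0) (w 1)) :=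
    (hJ.comp p0).clm_apply p1
  exact ((((hd2φ.comp p0).clm_apply p1).clm_apply p1).add
    (((hd2φ.comp p0).clm_apply hJw).clm_apply hJw)).add
    ((hdφ.comp p0).clm_apply
      ((((hdJ.comp p0).clm_apply hJw).clm_apply p1).add
        ((hJ.comp p0).clm_apply (((hdJ.comp p0).clm_apply p1).clm_apply p1))))

section Levi
variable {J : E n → (E n →L[ℝ] E n)} {φ : E n → ℝ} {u : ℂ → E n} {s : Set ℂ}

lemma lap_comp_eq (hJ : ContDiff ℝ (⊤:ℕ∞) J) (hJ2 : ∀ x v, J x (J x v) = -v)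
    (hφ : ContDiff ℝ (⊤:ℕ∞) φ) (hu : ContDiff ℝ (⊤:ℕ∞) u) (hs : IsOpen s)
    (hCR : ∀ z ∈ s, dy u z = J (u z) (dx u z)) :
    ∀ z ∈ s, lap (fun z => φ (u z)) z = LeviH J φ (gvec u 2 z) := by
  intro z hz
  have hφd : Differentiable ℝ φ := hφ.differentiable (by simp)
  have hud : Differentiable ℝ u := hu.differentiable (by simp)
  have hdφ : ContDiff ℝ (⊤:ℕ∞) (fderiv ℝ φ) := hφ.fderiv_right (by simp)
  have hdxu : ContDiff ℝ (⊤:ℕ∞) (dx u) := contDiff_dx hu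
  have hA : dx (fun z => φ (u z)) = fun z' => fderiv ℝ φ (u z') (dx u z') :=
    funext fun z' => fderiv_comp_dir (hφd (u z')) (hud z') 1
  have hA' : dy (fun z => φ (u z)) = fun z' => fderiv ℝ φ (u z') (dy u z') :=
    funext fun z' => fderiv_comp_dir (hφd (u z')) (hud z') Complex.I
  have hcd : Differentiable ℝ (fun z' => fderiv ℝ φ (u z')) :=
    (hdφ.differentiable (by simp)).comp hud
  have hcderiv : ∀ w : ℂ, fderiv ℝ (fun z' => fderiv ℝ φ (u z')) z w
      = fderiv ℝ (fderiv ℝ φ) (u z) (fderiv ℝ u z w) :=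
    fun w => fderiv_comp_dir ((hdφ.differentiable (by simp)) (u z)) (hud z) w
  have hB : dx (dx (fun z => φ (u z))) z
      = fderiv ℝ (fderiv ℝ φ) (u z) (dx u z) (dx u z) + fderiv ℝ φ (u z) (dx (dx u) z) := by
    rw [show dx (dx (fun z => φ (u z))) z = dx (fun z' => fderiv ℝ φ (u z') (dx u z')) z by rw [hA]]
    show fderiv ℝ (fun z' => fderiv ℝ φ (u z') (dx u z')) z 1 = _
    rw [fderiv_clm_apply (hcd z) ((hdxu.differentiable (by simp)) z)]
    simp only [ContinuousLinearMap.add_apply, ContinuousLinearMap.coe_comp',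
      Function.comp_apply, ContinuousLinearMap.flip_apply]
    rw [hcderiv 1]
    exact add_comm _ _
  have hC : dy (dy (fun z => φ (u z))) z
      = fderiv ℝ (fderiv ℝ φ) (u z) (dy u z) (dy u z) + fderiv ℝ φ (u z) (dy (dy u) z) := by
    rw [show dy (dy (fun z => φ (u z))) z = dy (fun z' => fderiv ℝ φ (u z') (dy u z')) z by rw [hA']]
    show fderiv ℝ (fun z' => fderiv ℝ φ (u z') (dy u z')) z Complex.I = _
    rw [fderiv_clm_apply (hcd z) ((contDiff_dy hu).differentiable (by simp) z)]
    simp only [ContinuousLinearMap.add_apply, ContinuousLinearMap.coe_comp',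
      Function.comp_apply, ContinuousLinearMap.flip_apply]
    rw [hcderiv Complex.I]
    exact add_comm _ _
  have hDyu : Set.EqOn (dy u) (fun z' => J (u z') (dx u z')) s := fun z' hz' => hCR z' hz'
  have hJud : Differentiable ℝ (fun z' => J (u z')) := (hJ.differentiable (by simp)).comp hud
  have hJderiv : ∀ w : ℂ, fderiv ℝ (fun z' => J (u z')) z w
      = fderiv ℝ J (u z) (fderiv ℝ u z w) :=
    fun w => fderiv_comp_dir ((hJ.differentiable (by simp)) (u z)) (hud z) w
  have hdydxu : dy (dx u) z
      = J (u z) (dx (dx u) z) + fderiv ℝ J (u z) (dx u z) (dx u z) := by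
    rw [← dx_dy_comm hu z]
    show fderiv ℝ (dy u) z 1 = _
    rw [Filter.EventuallyEq.fderiv_eq (Filter.eventuallyEq_of_mem (hs.mem_nhds hz) hDyu)]
    rw [fderiv_clm_apply (hJud z) ((hdxu.differentiable (by simp)) z)]
    simp only [ContinuousLinearMap.add_apply, ContinuousLinearMap.coe_comp',
      Function.comp_apply, ContinuousLinearMap.flip_apply]
    rw [hJderiv 1]
    rfl
  have hdydyu : dy (dy u) z
      = -(dx (dx u) z) + J (u z) (fderiv ℝ J (u z) (dx u z) (dx u z))
        + fderiv ℝ J (u z) (J (u z) (dx u z)) (dx u z) := by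
    show fderiv ℝ (dy u) z Complex.I = _
    rw [Filter.EventuallyEq.fderiv_eq (Filter.eventuallyEq_of_mem (hs.mem_nhds hz) hDyu)]
    rw [fderiv_clm_apply (hJud z) ((hdxu.differentiable (by simp)) z)]
    simp only [ContinuousLinearMap.add_apply, ContinuousLinearMap.coe_comp',
      Function.comp_apply, ContinuousLinearMap.flip_apply]
    rw [hJderiv Complex.I]
    rw [show fderiv ℝ (dx u) z Complex.I = dy (dx u) z from rfl, hdydxu,
        show fderiv ℝ u z Complex.I = dy u z from rfl, hCR z hz, map_add, hJ2]
  show dx (dx (fun z => φ (u z))) z + dy (dy (fun z => φ (u z))) z = _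
  rw [hB, hC, hdydyu, hCR z hz]
  show _ = fderiv ℝ (fderiv ℝ φ) (u z) (dx u z) (dx u z)
    + fderiv ℝ (fderiv ℝ φ) (u z) (J (u z) (dx u z)) (J (u z) (dx u z))
    + fderiv ℝ φ (u z)
        (fderiv ℝ J (u z) (J (u z) (dx u z)) (dx u z)
          + J (u z) (fderiv ℝ J (u z) (dx u z) (dx u z)))
  simp only [map_add, map_neg]
  ring

end Levi


lemma eqOn_mixD_lap {F : Type*} [NormedAddCommGroup F] [NormedSpace ℝ F]
    {f g : ℂ → F} {s : Set ℂ} (hs : IsOpen s) (h : Set.EqOn f g s) (p q : ℕ) :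
    Set.EqOn (mixD p q (lap f)) (mixD p q (lap g)) s := by
  have hl : Set.EqOn (lap f) (lap g) s := fun z hz => by
    show dx (dx f) z + dy (dy f) z = dx (dx g) z + dy (dy g) z
    rw [eqOn_dx hs (eqOn_dx hs h) hz, eqOn_dy hs (eqOn_dy hs h) hz]
  exact eqOn_dx_iter hs (eqOn_dy_iter hs hl q) p

end AuxLevi

/-- the `(p,q)`-derivative at `0` of `Δ(φ∘u)` depends only on the derivatives
`∂^m u/∂x^m(0)`, `1 ≤ m ≤ p+q+1`, of the `J`-holomorphic disk `u` (well-definedness of the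
`(p,q)`-th Levi form). -/
theorem levi_pq_well_defined {n : ℕ} (J : E n → (E n →L[ℝ] E n)) (φ : E n → ℝ)
    (hJsmooth : ContDiff ℝ (⊤ : ℕ∞) J) (hJ2 : ∀ x v, J x (J x v) = -v)
    (hJ0 : ∀ v₀ : E n, J 0 v₀ = Complex.I • v₀)
    (hφsmooth : ContDiff ℝ (⊤ : ℕ∞) φ) (hφ0 : φ 0 = 0)
    (hreg : ∀ x, φ x = 0 → fderiv ℝ φ x ≠ 0)
    (p q : ℕ) (u v : ℂ → E n) (εu εv : ℝ)
    (hu : IsJDisk J u εu) (hv : IsJDisk J v εv) (hu0 : u 0 = 0) (hv0 : v 0 = 0)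
    (hjets : ∀ m : ℕ, 1 ≤ m → m ≤ p + q + 1 → dx^[m] u 0 = dx^[m] v 0) :
    mixD p q (lap (fun z => φ (u z))) 0 = mixD p q (lap (fun z => φ (v z))) 0 := by
  obtain ⟨hεu, husm, huCR⟩ := hu
  obtain ⟨hεv, hvsm, hvCR⟩ := hv
  obtain ⟨U, hU, hUeq⟩ := exists_smooth_extension hεu husm
  obtain ⟨V, hV, hVeq⟩ := exists_smooth_extension hεv hvsm
  have hsu : IsOpen (ball (0:ℂ) (εu/4)) := isOpen_ball
  have hsv : IsOpen (ball (0:ℂ) (εv/4)) := isOpen_ball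
  have h0u : (0:ℂ) ∈ ball (0:ℂ) (εu/4) := mem_ball_self (by linarith)
  have h0v : (0:ℂ) ∈ ball (0:ℂ) (εv/4) := mem_ball_self (by linarith)
  have hCRU : ∀ z ∈ ball (0:ℂ) (εu/4), dy U z = J (U z) (dx U z) := by
    intro z hz
    have h1 : fderiv ℝ U z = fderiv ℝ u z :=
      Filter.EventuallyEq.fderiv_eq (Filter.eventuallyEq_of_mem (hsu.mem_nhds hz) hUeq)
    show fderiv ℝ U z Complex.I = J (U z) (fderiv ℝ U z 1)
    rw [h1, hUeq hz]
    exact huCR z (ball_subset_ball (by linarith) hz)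
  have hCRV : ∀ z ∈ ball (0:ℂ) (εv/4), dy V z = J (V z) (dx V z) := by
    intro z hz
    have h1 : fderiv ℝ V z = fderiv ℝ v z :=
      Filter.EventuallyEq.fderiv_eq (Filter.eventuallyEq_of_mem (hsv.mem_nhds hz) hVeq)
    show fderiv ℝ V z Complex.I = J (V z) (fderiv ℝ V z 1)
    rw [h1, hVeq hz]
    exact hvCR z (ball_subset_ball (by linarith) hz)
  have hLH : ContDiff ℝ (⊤:ℕ∞) (LeviH J φ) := contDiff_LeviH hJsmooth hφsmooth
  have keyU : mixD p q (lap (fun z => φ (u z))) 0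
      = dxN p (dyN J q (LeviH J φ)) (gvec U (2+q+p) 0) := by
    have e1 : mixD p q (lap (fun z => φ (u z))) 0 = mixD p q (lap (fun z => φ (U z))) 0 :=
      (eqOn_mixD_lap hsu (fun z hz => by rw [hUeq hz]) p q h0u).symm
    have hlap : Set.EqOn (lap (fun z => φ (U z))) (fun z => LeviH J φ (gvec U 2 z))
        (ball (0:ℂ) (εu/4)) :=
      fun z hz => lap_comp_eq hJsmooth hJ2 hφsmooth hU hsu hCRU z hz
    have e4 : Set.EqOn (dy^[q] (lap (fun z => φ (U z))))
        (fun z => dyN J q (LeviH J φ) (gvec U (2+q) z)) (ball (0:ℂ) (εu/4)) :=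
      fun z hz => (eqOn_dy_iter hsu hlap q hz).trans
        (dy_iter_comp hJsmooth hU hsu hCRU hLH q z hz)
    have e5 : mixD p q (lap (fun z => φ (U z)))
        = dx^[p] (dy^[q] (lap (fun z => φ (U z)))) := rfl
    rw [e1, e5, eqOn_dx_iter hsu e4 p h0u,
      dx_iter_comp hU (contDiff_dyN hJsmooth hLH q) p 0]
  have keyV : mixD p q (lap (fun z => φ (v z))) 0
      = dxN p (dyN J q (LeviH J φ)) (gvec V (2+q+p) 0) := by
    have e1 : mixD p q (lap (fun z => φ (v z))) 0 = mixD p q (lap (fun z => φ (V z))) 0 :=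
      (eqOn_mixD_lap hsv (fun z hz => by rw [hVeq hz]) p q h0v).symm
    have hlap : Set.EqOn (lap (fun z => φ (V z))) (fun z => LeviH J φ (gvec V 2 z))
        (ball (0:ℂ) (εv/4)) :=
      fun z hz => lap_comp_eq hJsmooth hJ2 hφsmooth hV hsv hCRV z hz
    have e4 : Set.EqOn (dy^[q] (lap (fun z => φ (V z))))
        (fun z => dyN J q (LeviH J φ) (gvec V (2+q) z)) (ball (0:ℂ) (εv/4)) :=
      fun z hz => (eqOn_dy_iter hsv hlap q hz).trans
        (dy_iter_comp hJsmooth hV hsv hCRV hLH q z hz)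
    have e5 : mixD p q (lap (fun z => φ (V z)))
        = dx^[p] (dy^[q] (lap (fun z => φ (V z)))) := rfl
    rw [e1, e5, eqOn_dx_iter hsv e4 p h0v,
      dx_iter_comp hV (contDiff_dyN hJsmooth hLH q) p 0]
  rw [keyU, keyV]
  congr 1
  funext i
  have hU0 : dx^[(i:ℕ)] U 0 = dx^[(i:ℕ)] u 0 := eqOn_dx_iter hsu hUeq (i:ℕ) h0u
  have hV0 : dx^[(i:ℕ)] V 0 = dx^[(i:ℕ)] v 0 := eqOn_dx_iter hsv hVeq (i:ℕ) h0v
  show dx^[(i:ℕ)] U 0 = dx^[(i:ℕ)] V 0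
  rw [hU0, hV0]
  rcases Nat.eq_zero_or_pos (i:ℕ) with h0 | h1
  · rw [h0]
    show u 0 = v 0
    rw [hu0, hv0]
  · exact hjets (i:ℕ) h1 (by have := i.isLt; omega)
end
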